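/- arXiv:0906.1086 — 7 statements merged into one kernel-verified Lean document; each statement's English description precedes it below -/
import Mathlib

section
/- Let G be a bridgeless cubic graph. Then G has a Fulkerson covering if and only if G has two compatible FR-triples. -/
open SimpleGraph

variable {V : Type*}

/-- Two edges (as unordered pairs) are disjoint: they share no vertex. -/
def Sym2Disjoint {V : Type*} (e f : Sym2 V) : Prop := ∀ v : V, v ∈ e → v ∉ f

/-- A matching of `G`, given as a set of edges of `G` which are pairwise disjoint. -/
def IsMatchingSet (G : SimpleGraph V) (M : Set (Sym2 V)) : Prop :=
  M ⊆ G.edgeSet ∧ M.Pairwise Sym2Disjoint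

/-- A perfect matching of `G`: a matching covering every vertex. -/
def IsPerfectMatchingSet (G : SimpleGraph V) (M : Set (Sym2 V)) : Prop :=
  IsMatchingSet G M ∧ ∀ v : V, ∃ e ∈ M, v ∈ e

/-- A cubic (3-regular) graph. -/
def IsCubic (G : SimpleGraph V) : Prop := ∀ v : V, (G.neighborSet v).ncard = 3

/-- A bridgeless graph. -/
def Bridgeless (G : SimpleGraph V) : Prop := ∀ e : Sym2 V, ¬ G.IsBridge e

/-- A Fulkerson covering: six perfect matchings such that every edge of `G`
lies in exactly two of them (counted with multiplicity in the list). -/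
def IsFulkersonCovering (G : SimpleGraph V) (M : Fin 6 → Set (Sym2 V)) : Prop :=
  (∀ i, IsPerfectMatchingSet G (M i)) ∧
  ∀ e ∈ G.edgeSet, ({i : Fin 6 | e ∈ M i} : Set (Fin 6)).ncard = 2

/-- An FR-triple: three perfect matchings with empty intersection. -/
def IsFRTriple (G : SimpleGraph V) (M1 M2 M3 : Set (Sym2 V)) : Prop :=
  IsPerfectMatchingSet G M1 ∧ IsPerfectMatchingSet G M2 ∧ IsPerfectMatchingSet G M3 ∧
  M1 ∩ M2 ∩ M3 = ∅

/-- `tSet G M1 M2 M3 k` is the set `T_k` of edges of `G` lying in exactly `k`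
of the three matchings (counted with multiplicity). -/
def tSet (G : SimpleGraph V) (M1 M2 M3 : Set (Sym2 V)) (k : ℕ) : Set (Sym2 V) :=
  {e ∈ G.edgeSet | ({i : Fin 3 | e ∈ ![M1, M2, M3] i} : Set (Fin 3)).ncard = k}

/-- Two FR-triples are compatible when `T_0 = T'_2` and `T_2 = T'_0`. -/
def CompatibleFR (G : SimpleGraph V) (M1 M2 M3 N1 N2 N3 : Set (Sym2 V)) : Prop :=
  tSet G M1 M2 M3 0 = tSet G N1 N2 N3 2 ∧ tSet G M1 M2 M3 2 = tSet G N1 N2 N3 0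


open Classical in
lemma ncard_fin3 (S : Set (Fin 3)) :
    S.ncard = (if (0:Fin 3) ∈ S then 1 else 0) + (if (1:Fin 3) ∈ S then 1 else 0) +
      (if (2:Fin 3) ∈ S then 1 else 0) := by
  rw [Set.ncard_eq_toFinset_card' S,
    show S.toFinset = Finset.univ.filter (· ∈ S) by ext; simp,
    Finset.card_filter, Fin.sum_univ_three]

open Classical in
lemma ncard_fin6 (S : Set (Fin 6)) :
    S.ncard = (if (0:Fin 6) ∈ S then 1 else 0) + (if (1:Fin 6) ∈ S then 1 else 0) +
      (if (2:Fin 6) ∈ S then 1 else 0) + (if (3:Fin 6) ∈ S then 1 else 0) +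
      (if (4:Fin 6) ∈ S then 1 else 0) + (if (5:Fin 6) ∈ S then 1 else 0) := by
  rw [Set.ncard_eq_toFinset_card' S,
    show S.toFinset = Finset.univ.filter (· ∈ S) by ext; simp,
    Finset.card_filter, Fin.sum_univ_six]

open Classical in
/-- The number of the three matchings containing `e`. -/
noncomputable def cnt3 {V : Type*} (e : Sym2 V) (A B C : Set (Sym2 V)) : ℕ :=
  (if e ∈ A then 1 else 0) + (if e ∈ B then 1 else 0) + (if e ∈ C then 1 else 0)

lemma mem_tSet_iff {V : Type*} (G : SimpleGraph V) (A B C : Set (Sym2 V)) (e : Sym2 V) (k : ℕ) :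
    e ∈ tSet G A B C k ↔ e ∈ G.edgeSet ∧ cnt3 e A B C = k := by
  classical
  unfold tSet cnt3
  simp only [Set.mem_setOf_eq, ncard_fin3, Matrix.cons_val_zero, Matrix.cons_val_one,
    Matrix.head_cons, show (![A, B, C] 2 : Set (Sym2 V)) = C from rfl]

/-- A bridgeless cubic graph has a Fulkerson covering if and only if it
has two compatible FR-triples. -/
theorem stmt_2 {V : Type*} [Fintype V] (G : SimpleGraph V)
    (hcubic : IsCubic G) (hbridgeless : Bridgeless G) :
    (∃ M : Fin 6 → Set (Sym2 V), IsFulkersonCovering G M) ↔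
    (∃ M1 M2 M3 N1 N2 N3 : Set (Sym2 V),
      IsFRTriple G M1 M2 M3 ∧ IsFRTriple G N1 N2 N3 ∧
      CompatibleFR G M1 M2 M3 N1 N2 N3) := by
  classical
  constructor
  · rintro ⟨M, hPM, hcount⟩
    have key : ∀ e ∈ G.edgeSet,
        cnt3 e (M 0) (M 1) (M 2) + cnt3 e (M 3) (M 4) (M 5) = 2 := by
      intro e he
      have h := hcount e he
      rw [ncard_fin6] at h
      simp only [Set.mem_setOf_eq] at h
      unfold cnt3
      omega
    have hFR : ∀ a b c : Fin 6, (∀ e, e ∈ M a → e ∈ M b → e ∈ M c →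
          cnt3 e (M 0) (M 1) (M 2) + cnt3 e (M 3) (M 4) (M 5) ≠ 2) →
        IsFRTriple G (M a) (M b) (M c) := by
      intro a b c h
      refine ⟨hPM a, hPM b, hPM c, ?_⟩
      rw [Set.eq_empty_iff_forall_notMem]
      rintro e ⟨⟨ha, hb⟩, hc⟩
      exact h e ha hb hc (key e ((hPM a).1.1 ha))
    refine ⟨M 0, M 1, M 2, M 3, M 4, M 5, ?_, ?_, ?_⟩
    · refine hFR 0 1 2 fun e ha hb hc hk => ?_
      unfold cnt3 at hk
      rw [if_pos ha, if_pos hb, if_pos hc] at hk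
      omega
    · refine hFR 3 4 5 fun e ha hb hc hk => ?_
      unfold cnt3 at hk
      rw [if_pos ha, if_pos hb, if_pos hc] at hk
      omega
    · refine ⟨?_, ?_⟩ <;> ext e <;> simp only [mem_tSet_iff] <;> constructor <;>
        rintro ⟨he, h⟩ <;> exact ⟨he, by have := key e he; omega⟩
  · rintro ⟨M1, M2, M3, N1, N2, N3, ⟨hp1, hp2, hp3, hI⟩, ⟨hq1, hq2, hq3, hJ⟩, hc1, hc2⟩
    refine ⟨![M1, M2, M3, N1, N2, N3], ?_, ?_⟩
    · intro i
      fin_cases i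
      · exact hp1
      · exact hp2
      · exact hp3
      · exact hq1
      · exact hq2
      · exact hq3
    · intro e he
      have hI' : ¬(e ∈ M1 ∧ e ∈ M2 ∧ e ∈ M3) := by
        rintro ⟨h1, h2, h3⟩
        exact absurd (hI ▸ (⟨⟨h1, h2⟩, h3⟩ : e ∈ M1 ∩ M2 ∩ M3)) (Set.notMem_empty e)
      have hJ' : ¬(e ∈ N1 ∧ e ∈ N2 ∧ e ∈ N3) := by
        rintro ⟨h1, h2, h3⟩
        exact absurd (hJ ▸ (⟨⟨h1, h2⟩, h3⟩ : e ∈ N1 ∩ N2 ∩ N3)) (Set.notMem_empty e)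
      have h02 : cnt3 e M1 M2 M3 = 0 ↔ cnt3 e N1 N2 N3 = 2 := by
        have := Set.ext_iff.1 hc1 e
        simp only [mem_tSet_iff] at this
        tauto
      have h20 : cnt3 e M1 M2 M3 = 2 ↔ cnt3 e N1 N2 N3 = 0 := by
        have := Set.ext_iff.1 hc2 e
        simp only [mem_tSet_iff] at this
        tauto
      rw [ncard_fin6]
      simp only [Set.mem_setOf_eq,
        show (![M1, M2, M3, N1, N2, N3] 0 : Set (Sym2 V)) = M1 from rfl,
        show (![M1, M2, M3, N1, N2, N3] 1 : Set (Sym2 V)) = M2 from rfl,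
        show (![M1, M2, M3, N1, N2, N3] 2 : Set (Sym2 V)) = M3 from rfl,
        show (![M1, M2, M3, N1, N2, N3] 3 : Set (Sym2 V)) = N1 from rfl,
        show (![M1, M2, M3, N1, N2, N3] 4 : Set (Sym2 V)) = N2 from rfl,
        show (![M1, M2, M3, N1, N2, N3] 5 : Set (Sym2 V)) = N3 from rfl]
      unfold cnt3 at h02 h20
      by_cases h1 : e ∈ M1 <;> by_cases h2 : e ∈ M2 <;> by_cases h3 : e ∈ M3 <;>
        by_cases h4 : e ∈ N1 <;> by_cases h5 : e ∈ N2 <;> by_cases h6 : e ∈ N3 <;>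
        simp_all <;> omega
end

section
/- Let G be a bridgeless cubic graph and let (M1, M2, M3, M4, M5, M6) be a Fulkerson covering of G. Set T = (M1, M2, M3) and T' = (M4, M5, M6). Then T and T' are FR-triples and they are compatible; more precisely T_1 = T'_1, T_0 = T'_2 and T_2 = T'_0. -/
open SimpleGraph

variable {V : Type*}

lemma ncard_setOf_fin {n : ℕ} (p : Fin n → Prop) [DecidablePred p] :
    ({i | p i} : Set (Fin n)).ncard = ∑ i, if p i then 1 else 0 := by
  classical
  rw [Set.ncard_eq_toFinset_card', Set.toFinset_setOf, Finset.card_filter]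

lemma key_sum {V : Type*} (G : SimpleGraph V) (M : Fin 6 → Set (Sym2 V))
    (hF : IsFulkersonCovering G M) (e : Sym2 V) (he : e ∈ G.edgeSet) :
    ({i : Fin 3 | e ∈ ![M 0, M 1, M 2] i} : Set (Fin 3)).ncard +
    ({i : Fin 3 | e ∈ ![M 3, M 4, M 5] i} : Set (Fin 3)).ncard = 2 := by
  classical
  have h6 := hF.2 e he
  rw [ncard_setOf_fin] at h6
  rw [ncard_setOf_fin, ncard_setOf_fin]
  rw [Fin.sum_univ_six] at h6
  rw [Fin.sum_univ_three, Fin.sum_univ_three]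
  simp only [Matrix.cons_val_zero, Matrix.cons_val_one, Matrix.head_cons,
    Matrix.cons_val_two, Matrix.tail_cons]
  by_cases h0 : e ∈ M 0 <;> by_cases h1 : e ∈ M 1 <;> by_cases h2 : e ∈ M 2 <;>
    by_cases h3 : e ∈ M 3 <;> by_cases h4 : e ∈ M 4 <;> by_cases h5 : e ∈ M 5 <;>
    simp [h0, h1, h2, h3, h4, h5] at h6 ⊢ <;> omega

/-- If `(M 0, …, M 5)` is a Fulkerson covering of a bridgeless cubic
graph `G`, then `T = (M 0, M 1, M 2)` and `T' = (M 3, M 4, M 5)` are FR-triples and they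
are compatible; more precisely `T_1 = T'_1`, `T_0 = T'_2` and `T_2 = T'_0`. -/
theorem stmt_3 {V : Type*} [Fintype V] (G : SimpleGraph V)
    (hcubic : IsCubic G) (hbridgeless : Bridgeless G)
    (M : Fin 6 → Set (Sym2 V)) (hF : IsFulkersonCovering G M) :
    IsFRTriple G (M 0) (M 1) (M 2) ∧ IsFRTriple G (M 3) (M 4) (M 5) ∧
    CompatibleFR G (M 0) (M 1) (M 2) (M 3) (M 4) (M 5) ∧
    tSet G (M 0) (M 1) (M 2) 1 = tSet G (M 3) (M 4) (M 5) 1 ∧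
    tSet G (M 0) (M 1) (M 2) 0 = tSet G (M 3) (M 4) (M 5) 2 ∧
    tSet G (M 0) (M 1) (M 2) 2 = tSet G (M 3) (M 4) (M 5) 0 := by

  classical
  have key := key_sum G M hF
  have mem1 : ∀ k e, e ∈ tSet G (M 0) (M 1) (M 2) k ↔
      e ∈ G.edgeSet ∧ ({i : Fin 3 | e ∈ ![M 0, M 1, M 2] i} : Set (Fin 3)).ncard = k := by
    intro k e; rfl
  have mem2 : ∀ k e, e ∈ tSet G (M 3) (M 4) (M 5) k ↔
      e ∈ G.edgeSet ∧ ({i : Fin 3 | e ∈ ![M 3, M 4, M 5] i} : Set (Fin 3)).ncard = k := by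
    intro k e; rfl
  have tEq : ∀ k k', k + k' = 2 →
      tSet G (M 0) (M 1) (M 2) k = tSet G (M 3) (M 4) (M 5) k' := by
    intro k k' hkk'
    ext e
    rw [mem1, mem2]
    constructor
    · rintro ⟨he, ha⟩
      exact ⟨he, by have := key e he; omega⟩
    · rintro ⟨he, hb⟩
      exact ⟨he, by have := key e he; omega⟩
  have empty1 : M 0 ∩ M 1 ∩ M 2 = ∅ := by
    ext e
    simp only [Set.mem_inter_iff, Set.mem_empty_iff_false, iff_false, not_and]
    rintro ⟨h0, h1⟩ h2
    have he : e ∈ G.edgeSet := ((hF.1 0).1.1) h0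
    have hk := key e he
    have huniv : ({i : Fin 3 | e ∈ ![M 0, M 1, M 2] i} : Set (Fin 3)) = Set.univ := by
      ext i; fin_cases i <;> simp [h0, h1, h2]
    rw [huniv, Set.ncard_univ, Nat.card_eq_fintype_card] at hk
    simp only [Fintype.card_fin] at hk
    omega
  have empty2 : M 3 ∩ M 4 ∩ M 5 = ∅ := by
    ext e
    simp only [Set.mem_inter_iff, Set.mem_empty_iff_false, iff_false, not_and]
    rintro ⟨h0, h1⟩ h2
    have he : e ∈ G.edgeSet := ((hF.1 3).1.1) h0
    have hk := key e he
    have huniv : ({i : Fin 3 | e ∈ ![M 3, M 4, M 5] i} : Set (Fin 3)) = Set.univ := by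
      ext i; fin_cases i <;> simp [h0, h1, h2]
    rw [huniv, Set.ncard_univ, Nat.card_eq_fintype_card] at hk
    simp only [Fintype.card_fin] at hk
    omega
  refine ⟨⟨hF.1 0, hF.1 1, hF.1 2, empty1⟩, ⟨hF.1 3, hF.1 4, hF.1 5, empty2⟩,
    ⟨tEq 0 2 rfl, tEq 2 0 rfl⟩, tEq 1 1 rfl, tEq 0 2 rfl, tEq 2 0 rfl⟩
end

section
/- Let G be a bridgeless cubic graph together with a perfect matching M and an F-family 𝓜 = {A, B, C, D} for M, and let N be a set of edges consisting, for each cycle of G∖M incident with 𝓜, of two disjoint edges of G covering its four determined vertices. Then M' = (M ∖ (A ∪ B ∪ C ∪ D)) ∪ N is a perfect matching of G. -/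
open SimpleGraph

variable {V : Type*}

/-- `S` is (the vertex set of) a cycle of `G∖M`: a connected component of the graph
obtained from `G` by deleting the edges of `M` (for `M` a perfect matching of a cubic
graph `G`, these components are exactly the cycles of `G∖M`). -/
def IsCycleOf (G : SimpleGraph V) (M : Set (Sym2 V)) (S : Set V) : Prop :=
  ∃ c : (G.deleteEdges M).ConnectedComponent, S = c.supp

/-- The edges of the cycle of `G∖M` with vertex set `S`: edges of `G` not in `M`
with both endpoints in `S`. -/
def cycleEdges (G : SimpleGraph V) (M : Set (Sym2 V)) (S : Set V) : Set (Sym2 V) :=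
  {e | e ∈ G.edgeSet ∧ e ∉ M ∧ ∀ v ∈ e, v ∈ S}

/-- The vertices of `S` incident with an edge of `X`. -/
def incVerts (S : Set V) (X : Set (Sym2 V)) : Set V :=
  {v | v ∈ S ∧ ∃ e ∈ X, v ∈ e}

/-- `A` is an `M`-balanced matching: `A = M ∩ M'` for some perfect matching `M'`. -/
def IsBalancedMatching (G : SimpleGraph V) (M A : Set (Sym2 V)) : Prop :=
  ∃ M' : Set (Sym2 V), IsPerfectMatchingSet G M' ∧ A = M ∩ M'

/-- `{A, B, C, D}` is an F-family for the perfect matching `M` of `G`: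
four pairwise disjoint `M`-balanced matchings such that
(i) every odd cycle of `G∖M` has, for each member, exactly one vertex incident with an
edge of that member;
(ii) every even cycle of `G∖M` incident with an edge of `A ∪ B ∪ C ∪ D` contains exactly
four vertices incident with edges of `A ∪ B ∪ C ∪ D`, and these four are incident to a
single member, or two of them are incident to one member and the other two to another
single member;
(iii) for each cycle of `G∖M` the four vertices so determined are covered by two
disjoint edges of `G` whose endpoints all lie among these four vertices. -/
def IsFFamily (G : SimpleGraph V) (M A B C D : Set (Sym2 V)) : Prop :=
  (∀ X ∈ ({A, B, C, D} : Set (Set (Sym2 V))), IsBalancedMatching G M X) ∧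
  [A, B, C, D].Pairwise Disjoint ∧
  (∀ S : Set V, IsCycleOf G M S → Odd S.ncard →
    ∀ X ∈ ({A, B, C, D} : Set (Set (Sym2 V))), (incVerts S X).ncard = 1) ∧
  (∀ S : Set V, IsCycleOf G M S → Even S.ncard →
    (incVerts S (A ∪ B ∪ C ∪ D)).Nonempty →
    (incVerts S (A ∪ B ∪ C ∪ D)).ncard = 4 ∧
    ((∃ X ∈ ({A, B, C, D} : Set (Set (Sym2 V))),
        incVerts S (A ∪ B ∪ C ∪ D) = incVerts S X) ∨
     (∃ X ∈ ({A, B, C, D} : Set (Set (Sym2 V))),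
      ∃ Y ∈ ({A, B, C, D} : Set (Set (Sym2 V))), X ≠ Y ∧
        (incVerts S X).ncard = 2 ∧ (incVerts S Y).ncard = 2 ∧
        incVerts S (A ∪ B ∪ C ∪ D) = incVerts S X ∪ incVerts S Y))) ∧
  (∀ S : Set V, IsCycleOf G M S → (incVerts S (A ∪ B ∪ C ∪ D)).Nonempty →
    ∃ e1 e2 : Sym2 V, e1 ∈ G.edgeSet ∧ e2 ∈ G.edgeSet ∧ e1 ≠ e2 ∧
      Sym2Disjoint e1 e2 ∧
      (∀ v : V, (v ∈ e1 ∨ v ∈ e2) ↔ v ∈ incVerts S (A ∪ B ∪ C ∪ D)))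

/-- `N` is a set of edges consisting, for each cycle of `G∖M` incident with the family
`{A, B, C, D}`, of exactly two disjoint edges of `G` covering the four determined
vertices of that cycle (and nothing else). -/
def IsNSet (G : SimpleGraph V) (M A B C D N : Set (Sym2 V)) : Prop :=
  (∀ e ∈ N, ∃ S : Set V, IsCycleOf G M S ∧
      (incVerts S (A ∪ B ∪ C ∪ D)).Nonempty ∧ ∀ v ∈ e, v ∈ S) ∧
  (∀ S : Set V, IsCycleOf G M S → (incVerts S (A ∪ B ∪ C ∪ D)).Nonempty →
    ∃ e1 e2 : Sym2 V, e1 ∈ G.edgeSet ∧ e2 ∈ G.edgeSet ∧ e1 ≠ e2 ∧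
      Sym2Disjoint e1 e2 ∧
      (∀ v : V, (v ∈ e1 ∨ v ∈ e2) ↔ v ∈ incVerts S (A ∪ B ∪ C ∪ D)) ∧
      {e ∈ N | ∀ v ∈ e, v ∈ S} = {e1, e2})

/-- Given a bridgeless cubic graph `G`, a perfect matching `M`, an
F-family `{A, B, C, D}` for `M` and an associated edge set `N` (two disjoint covering
edges for the four determined vertices of each incident cycle of `G∖M`), the set
`M' = (M ∖ (A ∪ B ∪ C ∪ D)) ∪ N` is a perfect matching of `G`. -/
theorem stmt_7 {V : Type*} [Fintype V] (G : SimpleGraph V)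
    (hcubic : IsCubic G) (hbridgeless : Bridgeless G)
    (M A B C D N : Set (Sym2 V)) (hM : IsPerfectMatchingSet G M)
    (hFam : IsFFamily G M A B C D) (hN : IsNSet G M A B C D N) :
    IsPerfectMatchingSet G ((M \ (A ∪ B ∪ C ∪ D)) ∪ N) := by
  obtain ⟨⟨hMsub, hMpair⟩, hMcov⟩ := hM
  -- A ∪ B ∪ C ∪ D ⊆ M
  have hsubM : A ∪ B ∪ C ∪ D ⊆ M := by
    intro e he
    have hbal : ∀ X ∈ ({A, B, C, D} : Set (Set (Sym2 V))), X ⊆ M := by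
      intro X hX
      obtain ⟨M', _, hq⟩ := hFam.1 X hX
      rw [hq]; exact Set.inter_subset_left
    rcases he with ((he | he) | he) | he
    · exact hbal A (by simp) he
    · exact hbal B (by simp) he
    · exact hbal C (by simp) he
    · exact hbal D (by simp) he
  -- structure of edges of N
  have hNprop : ∀ e ∈ N, ∃ S : Set V, IsCycleOf G M S ∧ (∀ v ∈ e, v ∈ S) ∧
      ∃ e1 e2 : Sym2 V, e1 ∈ G.edgeSet ∧ e2 ∈ G.edgeSet ∧ e1 ≠ e2 ∧
        Sym2Disjoint e1 e2 ∧
        (∀ v : V, (v ∈ e1 ∨ v ∈ e2) ↔ v ∈ incVerts S (A ∪ B ∪ C ∪ D)) ∧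
        {e' ∈ N | ∀ v ∈ e', v ∈ S} = {e1, e2} ∧ (e = e1 ∨ e = e2) := by
    intro e he
    obtain ⟨S, hcyc, hne, hverts⟩ := hN.1 e he
    obtain ⟨e1, e2, h1, h2, hne12, hd, hcov, hset⟩ := hN.2 S hcyc hne
    refine ⟨S, hcyc, hverts, e1, e2, h1, h2, hne12, hd, hcov, hset, ?_⟩
    have : e ∈ {e' ∈ N | ∀ v ∈ e', v ∈ S} := ⟨he, hverts⟩
    rw [hset] at this
    simpa using this
  constructor
  constructor
  · -- edges
    intro e he
    rcases he with ⟨heM, _⟩ | heN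
    · exact hMsub heM
    · obtain ⟨S, _, _, e1, e2, h1, h2, _, _, _, _, heq⟩ := hNprop e heN
      rcases heq with rfl | rfl <;> assumption
  · -- pairwise disjoint
    intro e he f hf hne v hve hvf
    rcases he with ⟨heM, heU⟩ | heN <;> rcases hf with ⟨hfM, hfU⟩ | hfN
    · exact hMpair heM hfM hne v hve hvf
    · -- e ∈ M \ U, f ∈ N
      obtain ⟨S, _, _, e1, e2, _, _, _, _, hcov, _, heq⟩ := hNprop f hfN
      have hv : v ∈ incVerts S (A ∪ B ∪ C ∪ D) := by
        apply (hcov v).mp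
        rcases heq with rfl | rfl
        · exact Or.inl hvf
        · exact Or.inr hvf
      obtain ⟨_, g, hg, hvg⟩ := hv
      by_cases hge : e = g
      · exact heU (hge ▸ hg)
      · exact hMpair heM (hsubM hg) hge v hve hvg
    · -- e ∈ N, f ∈ M \ U
      obtain ⟨S, _, _, e1, e2, _, _, _, _, hcov, _, heq⟩ := hNprop e heN
      have hv : v ∈ incVerts S (A ∪ B ∪ C ∪ D) := by
        apply (hcov v).mp
        rcases heq with rfl | rfl
        · exact Or.inl hve
        · exact Or.inr hve
      obtain ⟨_, g, hg, hvg⟩ := hv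
      by_cases hgf : f = g
      · exact hfU (hgf ▸ hg)
      · exact hMpair hfM (hsubM hg) hgf v hvf hvg
    · -- both in N
      obtain ⟨S, ⟨c, rfl⟩, hvertsE, e1, e2, _, _, hne12, hd, _, hset, heq⟩ := hNprop e heN
      obtain ⟨S', ⟨c', rfl⟩, hvertsF, _⟩ := hNprop f hfN
      have hcc : c = c' := by
        have h1 := hvertsE v hve
        have h2 := hvertsF v hvf
        rw [SimpleGraph.ConnectedComponent.mem_supp_iff] at h1 h2
        rw [← h1, ← h2]
      subst hcc
      have hfmem : f ∈ {e' ∈ N | ∀ v ∈ e', v ∈ c.supp} := ⟨hfN, hvertsF⟩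
      rw [hset] at hfmem
      have hfeq : f = e1 ∨ f = e2 := by simpa using hfmem
      rcases heq with rfl | rfl <;> rcases hfeq with rfl | rfl
      · exact hne rfl
      · exact hd v hve hvf
      · exact hd v hvf hve
      · exact hne rfl
  · -- covering
    intro v
    obtain ⟨e, heM, hve⟩ := hMcov v
    by_cases hU : e ∈ A ∪ B ∪ C ∪ D
    · set c := (G.deleteEdges M).connectedComponentMk v with hc
      have hvS : v ∈ c.supp := by rw [SimpleGraph.ConnectedComponent.mem_supp_iff]
      have hne : (incVerts c.supp (A ∪ B ∪ C ∪ D)).Nonempty := ⟨v, hvS, e, hU, hve⟩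
      obtain ⟨e1, e2, _, _, _, _, hcov, hset⟩ := hN.2 c.supp ⟨c, rfl⟩ hne
      have hv12 : v ∈ e1 ∨ v ∈ e2 := (hcov v).mpr ⟨hvS, e, hU, hve⟩
      have h1N : e1 ∈ N := by
        have : e1 ∈ ({e1, e2} : Set (Sym2 V)) := by simp
        rw [← hset] at this; exact this.1
      have h2N : e2 ∈ N := by
        have : e2 ∈ ({e1, e2} : Set (Sym2 V)) := by simp
        rw [← hset] at this; exact this.1
      rcases hv12 with h | h
      · exact ⟨e1, Or.inr h1N, h⟩
      · exact ⟨e2, Or.inr h2N, h⟩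
    · exact ⟨e, Or.inl ⟨heM, hU⟩, hve⟩
end

section
/- Let G be a cubic graph, M a perfect matching of G, and Γ an odd cycle of G∖M. Let M_X and M_Y be perfect matchings of G such that exactly one vertex x of Γ is incident with an edge of M_X ∩ M and exactly one vertex y of Γ is incident with an edge of M_Y ∩ M. If xy is an edge of Γ, then xy is the unique edge of Γ belonging to neither M_X nor M_Y. -/
open SimpleGraph

variable {V : Type*}

section Aux

lemma pm_unique {V : Type*} {G : SimpleGraph V} {N : Set (Sym2 V)}
    (h : IsPerfectMatchingSet G N) (v : V) :
    ∃ e, e ∈ N ∧ v ∈ e ∧ ∀ f ∈ N, v ∈ f → f = e := by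
  obtain ⟨e, he, hve⟩ := h.2 v
  refine ⟨e, he, hve, fun f hf hvf => ?_⟩
  by_contra hne
  exact h.1.2 hf he hne v hvf hve

lemma walk_prop {V : Type*} {H : SimpleGraph V} {P : V → Prop}
    (hstep : ∀ u v, P u → H.Adj u v → P v) :
    ∀ u v, H.Walk u v → P u → P v := by
  intro u v w
  induction w with
  | nil => exact id
  | cons h p ih => exact fun hu => ih (hstep _ _ hu h)

lemma two_nbrs {V : Type*} [Fintype V] {G : SimpleGraph V} (hcubic : IsCubic G)
    {M : Set (Sym2 V)} (hM : IsPerfectMatchingSet G M) (v : V) :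
    ∃ w1 w2, w1 ≠ w2 ∧ (G.deleteEdges M).neighborSet v = {w1, w2} := by
  obtain ⟨m, hmM, hvm, hmu⟩ := pm_unique hM v
  obtain ⟨u, rfl⟩ := Sym2.mem_iff_exists.mp hvm
  have hadj : G.Adj v u := hM.1.1 hmM
  have hset : (G.deleteEdges M).neighborSet v = G.neighborSet v \ {u} := by
    ext w
    simp only [SimpleGraph.mem_neighborSet, SimpleGraph.deleteEdges_adj, Set.mem_diff,
      Set.mem_singleton_iff]
    constructor
    · rintro ⟨h1, h2⟩
      exact ⟨h1, fun h => h2 (h ▸ hmM)⟩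
    · rintro ⟨h1, h2⟩
      refine ⟨h1, fun h => h2 ?_⟩
      have heq := hmu _ h (Sym2.mem_mk_left v w)
      rcases Sym2.eq_iff.mp heq with ⟨_, h'⟩ | ⟨h1', h2'⟩
      · exact h'
      · exact h2'.trans h1'
  have hcard : ((G.deleteEdges M).neighborSet v).ncard = 2 := by
    rw [hset, Set.ncard_diff_singleton_of_mem ((G.mem_neighborSet v u).mpr hadj),
      hcubic v]
  obtain ⟨a, b, hab, h⟩ := Set.ncard_eq_two.mp hcard
  exact ⟨a, b, hab, h⟩

end Aux

/-- Let `Γ` (with vertex set `S`) be an odd cycle of `G∖M`, and let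
`M_X`, `M_Y` be perfect matchings such that exactly one vertex `x` of `Γ` is incident
with an edge of `M_X ∩ M` and exactly one vertex `y` of `Γ` is incident with an edge of
`M_Y ∩ M`. If `xy` is an edge of `Γ`, then `xy` is the unique edge of `Γ` belonging to
neither `M_X` nor `M_Y`. -/
theorem stmt_8 {V : Type*} [Fintype V] (G : SimpleGraph V)
    (hcubic : IsCubic G)
    (M : Set (Sym2 V)) (hM : IsPerfectMatchingSet G M)
    (S : Set V) (hS : IsCycleOf G M S) (hodd : Odd S.ncard)
    (MX MY : Set (Sym2 V))
    (hMX : IsPerfectMatchingSet G MX) (hMY : IsPerfectMatchingSet G MY)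
    (x y : V) (hx : incVerts S (MX ∩ M) = {x}) (hy : incVerts S (MY ∩ M) = {y})
    (hxy : s(x, y) ∈ cycleEdges G M S) :
    ∀ e ∈ cycleEdges G M S, (e ∉ MX ∧ e ∉ MY) ↔ e = s(x, y) := by
  obtain ⟨c, rfl⟩ := hS
  set S := c.supp with hSdef
  -- membership in S is closed under adjacency in the deleted graph
  have hSclosed : ∀ v ∈ S, ∀ w, (G.deleteEdges M).Adj v w → w ∈ S := by
    intro v hv w h
    rw [SimpleGraph.ConnectedComponent.mem_supp_iff] at hv ⊢
    rw [← hv]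
    exact SimpleGraph.ConnectedComponent.sound h.symm.reachable
  -- edges of the deleted graph touching S are cycle edges
  have hedge : ∀ w z, w ∈ S → (G.deleteEdges M).Adj w z → s(w, z) ∈ cycleEdges G M S := by
    intro w z hw h
    rw [SimpleGraph.deleteEdges_adj] at h
    refine ⟨h.1, h.2, ?_⟩
    intro v hv
    rcases Sym2.mem_iff.mp hv with h' | h'
    · rw [h']; exact hw
    · rw [h']; exact hSclosed w hw z (SimpleGraph.deleteEdges_adj.mpr h)
  -- a cycle edge through w comes from an adjacency
  have hedge' : ∀ f ∈ cycleEdges G M S, ∀ w, w ∈ f →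
      ∃ z, (G.deleteEdges M).Adj w z ∧ f = s(w, z) := by
    intro f hf w hwf
    obtain ⟨z, rfl⟩ := Sym2.mem_iff_exists.mp hwf
    exact ⟨z, SimpleGraph.deleteEdges_adj.mpr ⟨(G.mem_edgeSet).mp hf.1, hf.2.1⟩, rfl⟩
  -- each vertex of S is on exactly two cycle edges
  have htwo : ∀ w ∈ S, ∃ g1 g2 : Sym2 V, g1 ≠ g2 ∧
      ∀ f, (f ∈ cycleEdges G M S ∧ w ∈ f) ↔ (f = g1 ∨ f = g2) := by
    intro w hw
    obtain ⟨w1, w2, h12, hnbr⟩ := two_nbrs hcubic hM w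
    have hadj1 : (G.deleteEdges M).Adj w w1 := by
      have h : w1 ∈ (G.deleteEdges M).neighborSet w := by rw [hnbr]; left; rfl
      exact ((G.deleteEdges M).mem_neighborSet w w1).mp h
    have hadj2 : (G.deleteEdges M).Adj w w2 := by
      have h : w2 ∈ (G.deleteEdges M).neighborSet w := by rw [hnbr]; right; rfl
      exact ((G.deleteEdges M).mem_neighborSet w w2).mp h
    refine ⟨s(w, w1), s(w, w2), ?_, ?_⟩
    · intro h
      rcases Sym2.eq_iff.mp h with ⟨_, h'⟩ | ⟨h1', h2'⟩
      · exact h12 h'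
      · exact h12 (h2'.trans h1')
    · intro f
      constructor
      · rintro ⟨hf, hwf⟩
        obtain ⟨z, hz, rfl⟩ := hedge' f hf w hwf
        have hzmem : z ∈ (G.deleteEdges M).neighborSet w :=
          (((G.deleteEdges M).mem_neighborSet w z)).mpr hz
        rw [hnbr] at hzmem
        rcases hzmem with rfl | rfl
        · exact Or.inl rfl
        · exact Or.inr rfl
      · rintro (rfl | rfl)
        · exact ⟨hedge w w1 hw hadj1, Sym2.mem_mk_left w w1⟩
        · exact ⟨hedge w w2 hw hadj2, Sym2.mem_mk_left w w2⟩
  -- basic facts about x and y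
  have hxinc : x ∈ incVerts S (MX ∩ M) := by rw [hx]; rfl
  have hyinc : y ∈ incVerts S (MY ∩ M) := by rw [hy]; rfl
  have hxS : x ∈ S := hxinc.1
  have hyS : y ∈ S := hyinc.1
  have hxney : x ≠ y := G.ne_of_adj ((G.mem_edgeSet).mp hxy.1)
  -- every MX-edge through x lies in M
  have hxMX : ∀ f ∈ MX, x ∈ f → f ∈ M := by
    obtain ⟨p, hpX, hxp, hup⟩ := pm_unique hMX x
    obtain ⟨m, hmXM, hxm⟩ := hxinc.2
    have hm' : m = p := hup m hmXM.1 hxm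
    intro f hf hxf
    rw [hup f hf hxf, ← hm']
    exact hmXM.2
  have hyMY : ∀ f ∈ MY, y ∈ f → f ∈ M := by
    obtain ⟨p, hpY, hyp, hup⟩ := pm_unique hMY y
    obtain ⟨m, hmYM, hym⟩ := hyinc.2
    have hm' : m = p := hup m hmYM.1 hym
    intro f hf hyf
    rw [hup f hf hyf, ← hm']
    exact hmYM.2
  have hsxyX : s(x, y) ∉ MX := fun h => hxy.2.1 (hxMX _ h (Sym2.mem_mk_left x y))
  have hsxyY : s(x, y) ∉ MY := fun h => hxy.2.1 (hyMY _ h (Sym2.mem_mk_right x y))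
  -- for v ∈ S with v ≠ x, the unique MX-edge through v is a cycle edge
  have hMXedge : ∀ v ∈ S, v ≠ x →
      ∃ p, p ∈ MX ∧ v ∈ p ∧ p ∈ cycleEdges G M S ∧ ∀ f ∈ MX, v ∈ f → f = p := by
    intro v hv hvx
    obtain ⟨p, hpX, hvp, hup⟩ := pm_unique hMX v
    have hpM : p ∉ M := by
      intro hpM
      have : v ∈ incVerts S (MX ∩ M) := ⟨hv, p, ⟨hpX, hpM⟩, hvp⟩
      rw [hx] at this
      exact hvx this
    obtain ⟨z, rfl⟩ := Sym2.mem_iff_exists.mp hvp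
    have hadj : (G.deleteEdges M).Adj v z :=
      SimpleGraph.deleteEdges_adj.mpr ⟨(G.mem_edgeSet).mp (hMX.1.1 hpX), hpM⟩
    exact ⟨s(v, z), hpX, Sym2.mem_mk_left v z, hedge v z hv hadj, hup⟩
  have hMYedge : ∀ v ∈ S, v ≠ y →
      ∃ q, q ∈ MY ∧ v ∈ q ∧ q ∈ cycleEdges G M S ∧ ∀ f ∈ MY, v ∈ f → f = q := by
    intro v hv hvy
    obtain ⟨q, hqY, hvq, huq⟩ := pm_unique hMY v
    have hqM : q ∉ M := by
      intro hqM
      have : v ∈ incVerts S (MY ∩ M) := ⟨hv, q, ⟨hqY, hqM⟩, hvq⟩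
      rw [hy] at this
      exact hvy this
    obtain ⟨z, rfl⟩ := Sym2.mem_iff_exists.mp hvq
    have hadj : (G.deleteEdges M).Adj v z :=
      SimpleGraph.deleteEdges_adj.mpr ⟨(G.mem_edgeSet).mp (hMY.1.1 hqY), hqM⟩
    exact ⟨s(v, z), hqY, Sym2.mem_mk_left v z, hedge v z hv hadj, huq⟩
  -- the key local claim
  have Call : ∀ w ∈ S,
      (w = x ∨ w = y ∨ ∃ f0, f0 ∈ cycleEdges G M S ∧ w ∈ f0 ∧
        ((¬ (f0 ∈ MX ↔ f0 ∈ MY)) ∨ f0 = s(x, y))) →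
      ∀ f ∈ cycleEdges G M S, w ∈ f → ((¬ (f ∈ MX ↔ f ∈ MY)) ∨ f = s(x, y)) := by
    intro w hw hcase f hf hwf
    obtain ⟨g1, g2, hg12, hgiff⟩ := htwo w hw
    have hf12 : f = g1 ∨ f = g2 := (hgiff f).mp ⟨hf, hwf⟩
    by_cases hwx : w = x
    · subst hwx
      have hfX : f ∉ MX := fun h => hf.2.1 (hxMX f h hwf)
      by_cases hfY : f ∈ MY
      · exact Or.inl (by simp [hfX, hfY])
      · right
        obtain ⟨q, hqY, hxq, hqC, hqU⟩ := hMYedge w hw hxney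
        have hq12 : q = g1 ∨ q = g2 := (hgiff q).mp ⟨hqC, hxq⟩
        have hs12 : s(w, y) = g1 ∨ s(w, y) = g2 := (hgiff s(w, y)).mp ⟨hxy, Sym2.mem_mk_left w y⟩
        have hqf : q ≠ f := fun h => hfY (h ▸ hqY)
        have hqs : q ≠ s(w, y) := fun h => hsxyY (h ▸ hqY)
        rcases hq12 with hq | hq
        · have hf2 : f = g2 := hf12.resolve_left (fun h => hqf (hq.trans h.symm))
          have hs2 : s(w, y) = g2 := hs12.resolve_left (fun h => hqs (hq.trans h.symm))
          exact hf2.trans hs2.symm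
        · have hf1 : f = g1 := hf12.resolve_right (fun h => hqf (hq.trans h.symm))
          have hs1 : s(w, y) = g1 := hs12.resolve_right (fun h => hqs (hq.trans h.symm))
          exact hf1.trans hs1.symm
    · by_cases hwy : w = y
      · subst hwy
        have hfY : f ∉ MY := fun h => hf.2.1 (hyMY f h hwf)
        by_cases hfX : f ∈ MX
        · exact Or.inl (by simp [hfX, hfY])
        · right
          obtain ⟨p, hpX, hyp, hpC, hpU⟩ := hMXedge w hw (Ne.symm hxney)
          have hp12 : p = g1 ∨ p = g2 := (hgiff p).mp ⟨hpC, hyp⟩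
          have hs12 : s(x, w) = g1 ∨ s(x, w) = g2 :=
            (hgiff s(x, w)).mp ⟨hxy, Sym2.mem_mk_right x w⟩
          have hpf : p ≠ f := fun h => hfX (h ▸ hpX)
          have hps : p ≠ s(x, w) := fun h => hsxyX (h ▸ hpX)
          rcases hp12 with hp | hp
          · have hf2 : f = g2 := hf12.resolve_left (fun h => hpf (hp.trans h.symm))
            have hs2 : s(x, w) = g2 := hs12.resolve_left (fun h => hps (hp.trans h.symm))
            exact hf2.trans hs2.symm
          · have hf1 : f = g1 := hf12.resolve_right (fun h => hpf (hp.trans h.symm))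
            have hs1 : s(x, w) = g1 := hs12.resolve_right (fun h => hps (hp.trans h.symm))
            exact hf1.trans hs1.symm
      · -- w is neither x nor y; use the witness edge
        rcases hcase with rfl | rfl | ⟨f0, hf0C, hwf0, hf0⟩
        · exact absurd rfl hwx
        · exact absurd rfl hwy
        · have hfs : f ≠ s(x, y) := by
            rintro rfl
            rcases Sym2.mem_iff.mp hwf with rfl | rfl
            · exact hwx rfl
            · exact hwy rfl
          have hf0s : f0 ≠ s(x, y) := by
            rintro rfl
            rcases Sym2.mem_iff.mp hwf0 with rfl | rfl
            · exact hwx rfl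
            · exact hwy rfl
          have hf0' : ¬ (f0 ∈ MX ↔ f0 ∈ MY) := hf0.resolve_right hf0s
          by_cases hff0 : f = f0
          · exact hff0 ▸ hf0
          · left
            have hf0_12 : f0 = g1 ∨ f0 = g2 := (hgiff f0).mp ⟨hf0C, hwf0⟩
            obtain ⟨p, hpX, hwp, hpC, hpU⟩ := hMXedge w hw hwx
            obtain ⟨q, hqY, hwq, hqC, hqU⟩ := hMYedge w hw hwy
            have hp12 : p = g1 ∨ p = g2 := (hgiff p).mp ⟨hpC, hwp⟩
            have hq12 : q = g1 ∨ q = g2 := (hgiff q).mp ⟨hqC, hwq⟩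
            have hfMX : f ∈ MX ↔ f = p := ⟨fun h => hpU f h hwf, fun h => h ▸ hpX⟩
            have hf0MX : f0 ∈ MX ↔ f0 = p := ⟨fun h => hpU f0 h hwf0, fun h => h ▸ hpX⟩
            have hfMY : f ∈ MY ↔ f = q := ⟨fun h => hqU f h hwf, fun h => h ▸ hqY⟩
            have hf0MY : f0 ∈ MY ↔ f0 = q := ⟨fun h => hqU f0 h hwf0, fun h => h ▸ hqY⟩
            have hcover : ∀ a : Sym2 V, (a = g1 ∨ a = g2) → a = f ∨ a = f0 := by
              intro a ha
              rcases hf12 with hf1 | hf1 <;> rcases hf0_12 with hf01 | hf01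
              · exact absurd (hf1.trans hf01.symm) hff0
              · rcases ha with rfl | rfl
                · exact Or.inl hf1.symm
                · exact Or.inr hf01.symm
              · rcases ha with rfl | rfl
                · exact Or.inr hf01.symm
                · exact Or.inl hf1.symm
              · exact absurd (hf1.trans hf01.symm) hff0
            have hpf : p = f ∨ p = f0 := hcover p hp12
            have hqf : q = f ∨ q = f0 := hcover q hq12
            intro hiff
            rcases hpf with h | h
            · -- p = f
              have hfX : f ∈ MX := hfMX.mpr h.symm
              have hfY : f ∈ MY := hiff.mp hfX
              have hqf' : q = f := (hfMY.mp hfY).symm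
              have hf0X : f0 ∉ MX := fun hh => hff0 ((hf0MX.mp hh).trans h).symm
              have hf0Y : f0 ∉ MY := fun hh => hff0 ((hf0MY.mp hh).trans hqf').symm
              exact hf0' (iff_of_false hf0X hf0Y)
            · -- p = f0
              have hf0X : f0 ∈ MX := hf0MX.mpr h.symm
              have hf0Y : f0 ∉ MY := fun hh => hf0' (iff_of_true hf0X hh)
              have hqne : q ≠ f0 := fun hh => hf0Y (hf0MY.mpr hh.symm)
              have hq' : q = f := hqf.resolve_right hqne
              have hfY : f ∈ MY := hfMY.mpr hq'.symm
              have hfX : f ∈ MX := hiff.mpr hfY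
              exact hff0 ((hfMX.mp hfX).trans h)
  -- propagate along the connected component
  have main : ∀ v ∈ S, ∀ f ∈ cycleEdges G M S, v ∈ f →
      ((¬ (f ∈ MX ↔ f ∈ MY)) ∨ f = s(x, y)) := by
    have hCx : ∀ f ∈ cycleEdges G M S, x ∈ f → ((¬ (f ∈ MX ↔ f ∈ MY)) ∨ f = s(x, y)) :=
      Call x hxS (Or.inl rfl)
    intro v hv
    have hreach : (G.deleteEdges M).Reachable x v := by
      have h1 := (SimpleGraph.ConnectedComponent.mem_supp_iff c x).mp hxS
      have h2 := (SimpleGraph.ConnectedComponent.mem_supp_iff c v).mp hv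
      exact SimpleGraph.ConnectedComponent.exact (h1.trans h2.symm)
    obtain ⟨wk⟩ := hreach
    refine (walk_prop (P := fun u => u ∈ S ∧ ∀ f ∈ cycleEdges G M S, u ∈ f →
      ((¬ (f ∈ MX ↔ f ∈ MY)) ∨ f = s(x, y))) ?_ x v wk ⟨hxS, hCx⟩).2
    rintro u v' ⟨huS, hCu⟩ hadj
    have hv'S : v' ∈ S := hSclosed u huS v' hadj
    refine ⟨hv'S, Call v' hv'S (Or.inr (Or.inr ⟨s(u, v'), hedge u v' huS hadj,
      Sym2.mem_mk_right u v', hCu _ (hedge u v' huS hadj) (Sym2.mem_mk_left u v')⟩))⟩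
  intro e he
  constructor
  · rintro ⟨heX, heY⟩
    have ha : e.out.1 ∈ e := Sym2.out_fst_mem e
    have haS : e.out.1 ∈ S := he.2.2 _ ha
    rcases main _ haS e he ha with h | h
    · exact absurd (iff_of_false heX heY) h
    · exact h
  · rintro rfl
    exact ⟨hsxyX, hsxyY⟩
end

section
/- Let G be a cubic graph, M a perfect matching of G, and Γ an even cycle of G∖M. Let M_X and M_Y be perfect matchings of G such that exactly two vertices x1, x2 of Γ are incident with edges of M_X ∩ M and exactly two vertices y1, y2 of Γ are incident with edges of M_Y ∩ M, where x1, x2, y1, y2 are pairwise distinct. If x1y1 and x2y2 are edges of Γ, then x1y1 and x2y2 are the only edges of Γ belonging to neither M_X nor M_Y. -/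
open SimpleGraph

variable {V : Type*}

/-- Two edges of a matching sharing a vertex are equal. -/
lemma match_mem_unique {V : Type*} {W : Set (Sym2 V)} (hW : W.Pairwise Sym2Disjoint)
    {f g : Sym2 V} {v : V} (hf : f ∈ W) (hg : g ∈ W) (hvf : v ∈ f) (hvg : v ∈ g) : f = g := by
  by_contra h
  exact hW hf hg h v hvf hvg

/-- If `v` is covered by an edge of `W ∩ M`, then no edge outside `M` containing `v`
lies in the matching `W`. -/
lemma special_noW {V : Type*} {W M : Set (Sym2 V)} (hW : W.Pairwise Sym2Disjoint)
    {v : V} {e' : Sym2 V} (he'W : e' ∈ W) (he'M : e' ∈ M) (hve' : v ∈ e')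
    {f : Sym2 V} (hfM : f ∉ M) (hvf : v ∈ f) : f ∉ W :=
  fun hfW => hfM ((match_mem_unique hW hfW he'W hvf hve') ▸ he'M)

/-- In a cubic graph with a perfect matching `M`, each vertex is incident with at most
two edges outside `M`. -/
lemma my_two_edges {V : Type*} [Fintype V] {G : SimpleGraph V} (hcubic : IsCubic G)
    {M : Set (Sym2 V)} (hM : IsPerfectMatchingSet G M) {v : V}
    {f1 f2 f3 : Sym2 V}
    (h1 : f1 ∈ G.edgeSet) (h1M : f1 ∉ M) (h1v : v ∈ f1)
    (h2 : f2 ∈ G.edgeSet) (h2M : f2 ∉ M) (h2v : v ∈ f2)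
    (h3 : f3 ∈ G.edgeSet) (h3M : f3 ∉ M) (h3v : v ∈ f3) :
    f1 = f2 ∨ f1 = f3 ∨ f2 = f3 := by
  by_contra hcon
  push_neg at hcon
  obtain ⟨h12, h13, h23⟩ := hcon
  obtain ⟨e, heM, hve⟩ := hM.2 v
  obtain ⟨m, rfl⟩ := Sym2.mem_iff_exists.mp hve
  have hadjm : G.Adj v m := G.mem_edgeSet.mp (hM.1.1 heM)
  obtain ⟨w1, rfl⟩ := Sym2.mem_iff_exists.mp h1v
  obtain ⟨w2, rfl⟩ := Sym2.mem_iff_exists.mp h2v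
  obtain ⟨w3, rfl⟩ := Sym2.mem_iff_exists.mp h3v
  have ha1 : G.Adj v w1 := G.mem_edgeSet.mp h1
  have ha2 : G.Adj v w2 := G.mem_edgeSet.mp h2
  have ha3 : G.Adj v w3 := G.mem_edgeSet.mp h3
  have hw1m : w1 ≠ m := fun h => h1M (by rw [h]; exact heM)
  have hw2m : w2 ≠ m := fun h => h2M (by rw [h]; exact heM)
  have hw3m : w3 ≠ m := fun h => h3M (by rw [h]; exact heM)
  have hw12 : w1 ≠ w2 := fun h => h12 (by rw [h])
  have hw13 : w1 ≠ w3 := fun h => h13 (by rw [h])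
  have hw23 : w2 ≠ w3 := fun h => h23 (by rw [h])
  have hsub : ({m, w1, w2, w3} : Set V) ⊆ G.neighborSet v := by
    intro u hu
    rcases hu with rfl | rfl | rfl | rfl
    · exact hadjm
    · exact ha1
    · exact ha2
    · exact ha3
  have hcard : ({m, w1, w2, w3} : Set V).ncard = 4 := by
    rw [Set.ncard_insert_of_notMem (by simp [Ne.symm hw1m, Ne.symm hw2m, Ne.symm hw3m]),
      Set.ncard_insert_of_notMem (by simp [hw12, hw13]),
      Set.ncard_insert_of_notMem (by simp [hw23]), Set.ncard_singleton]
  have hle := Set.ncard_le_ncard hsub (Set.toFinite _)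
  rw [hcard, hcubic v] at hle
  omega

/-- At a special vertex `v` (incident to an edge of `W ∩ M`, but not to any edge of
`Z ∩ M`), any non-`M` edge other than `a` avoids `W` and lies in `Z`. -/
lemma other_edge {V : Type*} [Fintype V] {G : SimpleGraph V} (hcubic : IsCubic G)
    {M : Set (Sym2 V)} (hM : IsPerfectMatchingSet G M)
    {W Z : Set (Sym2 V)} (hW : IsPerfectMatchingSet G W) (hZ : IsPerfectMatchingSet G Z)
    {v : V} {a : Sym2 V}
    (haE : a ∈ G.edgeSet) (haM : a ∉ M) (hva : v ∈ a) (haZ : a ∉ Z)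
    (hvW : ∃ e ∈ W, e ∈ M ∧ v ∈ e)
    (hvZ : ∀ e ∈ Z, v ∈ e → e ∉ M)
    {f : Sym2 V} (hfE : f ∈ G.edgeSet) (hfM : f ∉ M) (hvf : v ∈ f) (hfa : f ≠ a) :
    f ∉ W ∧ f ∈ Z := by
  obtain ⟨e', he'W, he'M, hve'⟩ := hvW
  have hfW : f ∉ W := special_noW hW.1.2 he'W he'M hve' hfM hvf
  obtain ⟨eZ, heZ, hveZ⟩ := hZ.2 v
  have heZM : eZ ∉ M := hvZ eZ heZ hveZ
  have heZE := hZ.1.1 heZ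
  by_cases hfeZ : f = eZ
  · exact ⟨hfW, hfeZ ▸ heZ⟩
  · exfalso
    rcases my_two_edges hcubic hM haE haM hva hfE hfM hvf heZE heZM hveZ with h | h | h
    · exact hfa h.symm
    · exact haZ (h ▸ heZ)
    · exact hfeZ h

/-- At an ordinary vertex `v` (not incident to edges of `W ∩ M` nor of `Z ∩ M`),
the membership pattern in `W, Z` of the two incident non-`M` edges is opposite. -/
lemma ordinary_edges {V : Type*} [Fintype V] {G : SimpleGraph V} (hcubic : IsCubic G)
    {M : Set (Sym2 V)} (hM : IsPerfectMatchingSet G M)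
    {W Z : Set (Sym2 V)} (hW : IsPerfectMatchingSet G W) (hZ : IsPerfectMatchingSet G Z)
    {v : V}
    (hvW : ∀ e ∈ W, v ∈ e → e ∉ M) (hvZ : ∀ e ∈ Z, v ∈ e → e ∉ M)
    {f g : Sym2 V}
    (hf : f ∈ G.edgeSet) (hfM : f ∉ M) (hvf : v ∈ f)
    (hg : g ∈ G.edgeSet) (hgM : g ∉ M) (hvg : v ∈ g)
    (hfg : f ≠ g)
    (hopt : (f ∉ W ∧ f ∉ Z) ∨ (f ∈ W ∧ f ∈ Z)) :
    (g ∉ W ∧ g ∉ Z) ∨ (g ∈ W ∧ g ∈ Z) := by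
  rcases hopt with ⟨hfW, hfZ⟩ | ⟨hfW, hfZ⟩
  · right
    obtain ⟨eW, heW, hveW⟩ := hW.2 v
    obtain ⟨eZ, heZ, hveZ⟩ := hZ.2 v
    have heWM := hvW eW heW hveW
    have heZM := hvZ eZ heZ hveZ
    have heWE := hW.1.1 heW
    have heZE := hZ.1.1 heZ
    have hgeW : g = eW := by
      rcases my_two_edges hcubic hM hf hfM hvf hg hgM hvg heWE heWM hveW with h | h | h
      · exact absurd h hfg
      · exact absurd (h ▸ heW) hfW
      · exact h
    have hgeZ : g = eZ := by
      rcases my_two_edges hcubic hM hf hfM hvf hg hgM hvg heZE heZM hveZ with h | h | h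
      · exact absurd h hfg
      · exact absurd (h ▸ heZ) hfZ
      · exact h
    exact ⟨hgeW ▸ heW, hgeZ ▸ heZ⟩
  · left
    exact ⟨fun hgW => hfg (match_mem_unique hW.1.2 hfW hgW hvf hvg),
      fun hgZ => hfg (match_mem_unique hZ.1.2 hfZ hgZ hvf hvg)⟩

/-- Let `Γ` (with vertex set `S`) be an even cycle of `G∖M`, and let
`M_X`, `M_Y` be perfect matchings such that exactly the two vertices `x1, x2` of `Γ`
are incident with edges of `M_X ∩ M` and exactly the two vertices `y1, y2` are incident
with edges of `M_Y ∩ M`, the four vertices being pairwise distinct. If `x1y1` and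
`x2y2` are edges of `Γ`, then they are the only edges of `Γ` belonging to neither
`M_X` nor `M_Y`. -/
theorem stmt_9 {V : Type*} [Fintype V] (G : SimpleGraph V)
    (hcubic : IsCubic G)
    (M : Set (Sym2 V)) (hM : IsPerfectMatchingSet G M)
    (S : Set V) (hS : IsCycleOf G M S) (heven : Even S.ncard)
    (MX MY : Set (Sym2 V))
    (hMX : IsPerfectMatchingSet G MX) (hMY : IsPerfectMatchingSet G MY)
    (x1 x2 y1 y2 : V)
    (hx : incVerts S (MX ∩ M) = {x1, x2}) (hy : incVerts S (MY ∩ M) = {y1, y2})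
    (hd : [x1, x2, y1, y2].Pairwise (· ≠ ·))
    (he1 : s(x1, y1) ∈ cycleEdges G M S) (he2 : s(x2, y2) ∈ cycleEdges G M S) :
    ∀ e ∈ cycleEdges G M S,
      (e ∉ MX ∧ e ∉ MY) ↔ (e = s(x1, y1) ∨ e = s(x2, y2)) := by
  classical
  obtain ⟨c, hSc⟩ := hS
  simp only [List.pairwise_cons, List.mem_cons, List.mem_singleton, List.not_mem_nil] at hd
  obtain ⟨hd1, hd2, hd3, -⟩ := hd
  have hx1x2 : x1 ≠ x2 := hd1 x2 (by simp)
  have hx1y1 : x1 ≠ y1 := hd1 y1 (by simp)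
  have hx1y2 : x1 ≠ y2 := hd1 y2 (by simp)
  have hx2y1 : x2 ≠ y1 := hd2 y1 (by simp)
  have hx2y2 : x2 ≠ y2 := hd2 y2 (by simp)
  have hy1y2 : y1 ≠ y2 := hd3 y2 (by simp)
  -- closure of S under G'-adjacency
  have hadjS : ∀ {v w : V}, v ∈ S → (G.deleteEdges M).Adj v w → w ∈ S := by
    intro v w hv hadj
    rw [hSc, SimpleGraph.ConnectedComponent.mem_supp_iff] at hv ⊢
    exact (SimpleGraph.ConnectedComponent.sound hadj.symm.reachable).trans hv
  have hcyc_intro : ∀ {v w : V}, v ∈ S → (G.deleteEdges M).Adj v w → s(v, w) ∈ cycleEdges G M S := by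
    intro v w hv h
    have h' := SimpleGraph.deleteEdges_adj.mp h
    refine ⟨G.mem_edgeSet.mpr h'.1, h'.2, ?_⟩
    intro u hu
    rcases Sym2.mem_iff.mp hu with rfl | rfl
    · exact hv
    · exact hadjS hv h
  have hedge_at : ∀ {v : V} {f : Sym2 V}, v ∈ S → f ∈ G.edgeSet → f ∉ M → v ∈ f →
      ∃ w, f = s(v, w) ∧ (G.deleteEdges M).Adj v w := by
    intro v f hv hf hfM hvf
    obtain ⟨w, rfl⟩ := Sym2.mem_iff_exists.mp hvf
    exact ⟨w, rfl, SimpleGraph.deleteEdges_adj.mpr ⟨G.mem_edgeSet.mp hf, hfM⟩⟩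
  -- non-incidence with W ∩ M for non-special vertices
  have hnotinc : ∀ {W : Set (Sym2 V)} {P : Set V}, incVerts S (W ∩ M) = P →
      ∀ {v : V}, v ∈ S → v ∉ P → ∀ e ∈ W, v ∈ e → e ∉ M := by
    intro W P hP v hv hvP e heW hve heM
    exact hvP (hP ▸ (⟨hv, e, ⟨heW, heM⟩, hve⟩ : v ∈ incVerts S (W ∩ M)))
  -- special vertices are in S
  have hx1S : x1 ∈ S := he1.2.2 x1 (by simp)
  have hy1S : y1 ∈ S := he1.2.2 y1 (by simp)
  have hx2S : x2 ∈ S := he2.2.2 x2 (by simp)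
  have hy2S : y2 ∈ S := he2.2.2 y2 (by simp)
  -- the special incidence data
  have hx1inc : ∃ e ∈ MX, e ∈ M ∧ x1 ∈ e := by
    have : x1 ∈ incVerts S (MX ∩ M) := by rw [hx]; simp
    obtain ⟨-, e, ⟨h1, h2⟩, h3⟩ := this
    exact ⟨e, h1, h2, h3⟩
  have hx2inc : ∃ e ∈ MX, e ∈ M ∧ x2 ∈ e := by
    have : x2 ∈ incVerts S (MX ∩ M) := by rw [hx]; simp
    obtain ⟨-, e, ⟨h1, h2⟩, h3⟩ := this
    exact ⟨e, h1, h2, h3⟩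
  have hy1inc : ∃ e ∈ MY, e ∈ M ∧ y1 ∈ e := by
    have : y1 ∈ incVerts S (MY ∩ M) := by rw [hy]; simp
    obtain ⟨-, e, ⟨h1, h2⟩, h3⟩ := this
    exact ⟨e, h1, h2, h3⟩
  have hy2inc : ∃ e ∈ MY, e ∈ M ∧ y2 ∈ e := by
    have : y2 ∈ incVerts S (MY ∩ M) := by rw [hy]; simp
    obtain ⟨-, e, ⟨h1, h2⟩, h3⟩ := this
    exact ⟨e, h1, h2, h3⟩
  -- no Γ-edge at a special vertex lies in its matching
  have hx1_noMX : ∀ {f : Sym2 V}, f ∉ M → x1 ∈ f → f ∉ MX := by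
    intro f hfM hvf
    obtain ⟨e, h1, h2, h3⟩ := hx1inc
    exact special_noW hMX.1.2 h1 h2 h3 hfM hvf
  have hx2_noMX : ∀ {f : Sym2 V}, f ∉ M → x2 ∈ f → f ∉ MX := by
    intro f hfM hvf
    obtain ⟨e, h1, h2, h3⟩ := hx2inc
    exact special_noW hMX.1.2 h1 h2 h3 hfM hvf
  have hy1_noMY : ∀ {f : Sym2 V}, f ∉ M → y1 ∈ f → f ∉ MY := by
    intro f hfM hvf
    obtain ⟨e, h1, h2, h3⟩ := hy1inc
    exact special_noW hMY.1.2 h1 h2 h3 hfM hvf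
  have hy2_noMY : ∀ {f : Sym2 V}, f ∉ M → y2 ∈ f → f ∉ MY := by
    intro f hfM hvf
    obtain ⟨e, h1, h2, h3⟩ := hy2inc
    exact special_noW hMY.1.2 h1 h2 h3 hfM hvf
  have haNotMX : s(x1, y1) ∉ MX := hx1_noMX he1.2.1 (by simp)
  have haNotMY : s(x1, y1) ∉ MY := hy1_noMY he1.2.1 (by simp)
  have hbNotMX : s(x2, y2) ∉ MX := hx2_noMX he2.2.1 (by simp)
  have hbNotMY : s(x2, y2) ∉ MY := hy2_noMY he2.2.1 (by simp)
  -- the "bad" predicate: an edge of Γ other than the two special edges lying in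
  -- neither or in both matchings
  set memH : Sym2 V → Prop := fun f => f ∈ cycleEdges G M S ∧ f ≠ s(x1, y1) ∧
    f ≠ s(x2, y2) ∧ ((f ∉ MX ∧ f ∉ MY) ∨ (f ∈ MX ∧ f ∈ MY)) with hmemH
  -- Claim A: no bad edge touches a special vertex
  have claimA : ∀ f, memH f → x1 ∉ f ∧ x2 ∉ f ∧ y1 ∉ f ∧ y2 ∉ f := by
    intro f hf
    obtain ⟨⟨hfE, hfM, hfS⟩, hfa, hfb, hopt⟩ := hf
    refine ⟨?_, ?_, ?_, ?_⟩
    · intro hvf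
      have := other_edge hcubic hM hMX hMY he1.1 he1.2.1 (by simp) haNotMY hx1inc
        (hnotinc hy hx1S (by simp [hx1y1, hx1y2]) : ∀ e ∈ MY, x1 ∈ e → e ∉ M)
        hfE hfM hvf hfa
      rcases hopt with ⟨-, h2⟩ | ⟨h1, -⟩
      · exact h2 this.2
      · exact this.1 h1
    · intro hvf
      have := other_edge hcubic hM hMX hMY he2.1 he2.2.1 (by simp) hbNotMY hx2inc
        (hnotinc hy hx2S (by simp [hx2y1, hx2y2]) : ∀ e ∈ MY, x2 ∈ e → e ∉ M)
        hfE hfM hvf hfb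
      rcases hopt with ⟨-, h2⟩ | ⟨h1, -⟩
      · exact h2 this.2
      · exact this.1 h1
    · intro hvf
      have := other_edge hcubic hM hMY hMX he1.1 he1.2.1 (by simp) haNotMX hy1inc
        (hnotinc hx hy1S (by simp [Ne.symm hx1y1, Ne.symm hx2y1]) : ∀ e ∈ MX, y1 ∈ e → e ∉ M)
        hfE hfM hvf hfa
      rcases hopt with ⟨h1, -⟩ | ⟨-, h2⟩
      · exact h1 this.2
      · exact this.1 h2
    · intro hvf
      have := other_edge hcubic hM hMY hMX he2.1 he2.2.1 (by simp) hbNotMX hy2inc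
        (hnotinc hx hy2S (by simp [Ne.symm hx1y2, Ne.symm hx2y2]) : ∀ e ∈ MX, y2 ∈ e → e ∉ M)
        hfE hfM hvf hfb
      rcases hopt with ⟨h1, -⟩ | ⟨-, h2⟩
      · exact h1 this.2
      · exact this.1 h2
  -- Claim B: badness propagates along the cycle
  have claimB : ∀ v w f, memH f → v ∈ f → (G.deleteEdges M).Adj v w → ∃ g, memH g ∧ w ∈ g := by
    intro v w f hf hvf hadj
    obtain ⟨⟨hfE, hfM, hfS⟩, hfa, hfb, hopt⟩ := hf
    have hvS : v ∈ S := hfS v hvf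
    have hA := claimA f ⟨⟨hfE, hfM, hfS⟩, hfa, hfb, hopt⟩
    have hvx1 : v ≠ x1 := fun h => hA.1 (h ▸ hvf)
    have hvx2 : v ≠ x2 := fun h => hA.2.1 (h ▸ hvf)
    have hvy1 : v ≠ y1 := fun h => hA.2.2.1 (h ▸ hvf)
    have hvy2 : v ≠ y2 := fun h => hA.2.2.2 (h ▸ hvf)
    have hg : s(v, w) ∈ cycleEdges G M S := hcyc_intro hvS hadj
    by_cases hgf : s(v, w) = f
    · exact ⟨f, ⟨⟨hfE, hfM, hfS⟩, hfa, hfb, hopt⟩, hgf ▸ (Sym2.mem_mk_right v w)⟩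
    · have hga : s(v, w) ≠ s(x1, y1) := by
        intro h
        have hv : v ∈ s(x1, y1) := h ▸ (Sym2.mem_mk_left v w)
        rcases Sym2.mem_iff.mp hv with h' | h'
        · exact hvx1 h'
        · exact hvy1 h'
      have hgb : s(v, w) ≠ s(x2, y2) := by
        intro h
        have hv : v ∈ s(x2, y2) := h ▸ (Sym2.mem_mk_left v w)
        rcases Sym2.mem_iff.mp hv with h' | h'
        · exact hvx2 h'
        · exact hvy2 h'
      have hopt' := ordinary_edges hcubic hM hMX hMY
        (hnotinc hx hvS (by simp [hvx1, hvx2]) : ∀ e ∈ MX, v ∈ e → e ∉ M)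
        (hnotinc hy hvS (by simp [hvy1, hvy2]) : ∀ e ∈ MY, v ∈ e → e ∉ M)
        hfE hfM hvf hg.1 hg.2.1 (Sym2.mem_mk_left v w) (fun h => hgf h.symm) hopt
      exact ⟨s(v, w), ⟨hg, hga, hgb, hopt'⟩, Sym2.mem_mk_right v w⟩
  -- the key emptiness claim via connectivity
  have key : ∀ f ∈ cycleEdges G M S, f ≠ s(x1, y1) → f ≠ s(x2, y2) →
      ¬((f ∉ MX ∧ f ∉ MY) ∨ (f ∈ MX ∧ f ∈ MY)) := by
    intro f0 hf0 hf0a hf0b hf0opt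
    obtain ⟨p, hpf⟩ : ∃ p, p ∈ f0 := Sym2.ind (fun x y => ⟨x, Sym2.mem_mk_left x y⟩) f0
    have hpS : p ∈ S := hf0.2.2 p hpf
    have hreach : (G.deleteEdges M).Reachable p x1 := by
      have h1 : (G.deleteEdges M).connectedComponentMk p = c := by
        rw [← SimpleGraph.ConnectedComponent.mem_supp_iff, ← hSc]; exact hpS
      have h2 : (G.deleteEdges M).connectedComponentMk x1 = c := by
        rw [← SimpleGraph.ConnectedComponent.mem_supp_iff, ← hSc]; exact hx1S
      exact SimpleGraph.ConnectedComponent.exact (h1.trans h2.symm)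
    obtain ⟨wlk⟩ := hreach
    have hwalk : ∀ {u w : V} (_ : (G.deleteEdges M).Walk u w), (∃ f, memH f ∧ u ∈ f) →
        ∃ f, memH f ∧ w ∈ f := by
      intro u w wlk'
      induction wlk' with
      | nil => exact id
      | cons h p ih =>
        rintro ⟨f, hf, huf⟩
        exact ih (claimB _ _ _ hf huf h)
    obtain ⟨f, hf, hx1f⟩ := hwalk wlk ⟨f0, ⟨hf0, hf0a, hf0b, hf0opt⟩, hpf⟩
    exact (claimA f hf).1 hx1f
  -- conclusion
  intro e he
  constructor
  · rintro ⟨heX, heY⟩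
    by_contra hcon
    push_neg at hcon
    exact key e he hcon.1 hcon.2 (Or.inl ⟨heX, heY⟩)
  · rintro (rfl | rfl)
    · exact ⟨haNotMX, haNotMY⟩
    · exact ⟨hbNotMX, hbNotMY⟩
end

section
/- Let G be a cubic graph, M a perfect matching of G, and Γ an even cycle of G∖M. Let M_X and M_Y be perfect matchings of G such that exactly two vertices x1, x2 of Γ are incident with edges of M_X ∩ M and exactly two vertices y1, y2 of Γ are incident with edges of M_Y ∩ M, where x1, x2, y1, y2 are pairwise distinct and x1x2 and y1y2 are edges of Γ. Then either x1x2 and y1y2 are the only edges of Γ belonging to neither M_X nor M_Y, or the edges of Γ belonging to M_X ∪ M_Y form a perfect matching of Γ in which every edge belongs to both M_X and M_Y except x1x2, which belongs to M_Y and not M_X, and y1y2, which belongs to M_X and not M_Y. -/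
open SimpleGraph

variable {V : Type*}

lemma matching_unique {N : Set (Sym2 V)} (hN : N.Pairwise Sym2Disjoint)
    {e f : Sym2 V} {v : V} (he : e ∈ N) (hf : f ∈ N) (hve : v ∈ e) (hvf : v ∈ f) :
    e = f := by
  by_contra h
  exact hN he hf h v hve hvf

lemma two_set_eq {α : Type*} {s : Set α} (h2 : s.ncard = 2) {e p q : α}
    (he : e ∈ s) (hp : p ∈ s) (hq : q ∈ s) (hpe : p ≠ e) (hqe : q ≠ e) : p = q := by
  obtain ⟨a, b, hab, rfl⟩ := Set.ncard_eq_two.mp h2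
  simp only [Set.mem_insert_iff, Set.mem_singleton_iff] at he hp hq
  rcases he with rfl | rfl <;> rcases hp with rfl | rfl <;> rcases hq with rfl | rfl <;>
    first | rfl | (exfalso; tauto)

lemma two_set_mem {α : Type*} {s : Set α} (h2 : s.ncard = 2) {e p q : α}
    (he : e ∈ s) (hp : p ∈ s) (hq : q ∈ s) (hpq : p ≠ q) : e = p ∨ e = q := by
  obtain ⟨a, b, hab, rfl⟩ := Set.ncard_eq_two.mp h2
  simp only [Set.mem_insert_iff, Set.mem_singleton_iff] at he hp hq
  rcases hp with rfl | rfl <;> rcases hq with rfl | rfl <;> tauto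

lemma sym2_exists_mem {α : Type*} (e : Sym2 α) : ∃ v, v ∈ e := by
  induction e using Sym2.inductionOn with
  | hf a b => exact ⟨a, Sym2.mem_mk_left a b⟩

/-- Let `Γ` (with vertex set `S`) be an even cycle of `G∖M`, and let
`M_X`, `M_Y` be perfect matchings such that exactly the two vertices `x1, x2` of `Γ`
are incident with edges of `M_X ∩ M` and exactly the two vertices `y1, y2` with edges of
`M_Y ∩ M`, the four vertices pairwise distinct, and `x1x2`, `y1y2` edges of `Γ`. Then
either `x1x2` and `y1y2` are the only edges of `Γ` in neither `M_X` nor `M_Y`, or the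
edges of `Γ` in `M_X ∪ M_Y` form a perfect matching of `Γ` in which every edge lies in
both `M_X` and `M_Y` except `x1x2` (in `M_Y` only) and `y1y2` (in `M_X` only). -/
theorem stmt_10 {V : Type*} [Fintype V] (G : SimpleGraph V)
    (hcubic : IsCubic G)
    (M : Set (Sym2 V)) (hM : IsPerfectMatchingSet G M)
    (S : Set V) (hS : IsCycleOf G M S) (heven : Even S.ncard)
    (MX MY : Set (Sym2 V))
    (hMX : IsPerfectMatchingSet G MX) (hMY : IsPerfectMatchingSet G MY)
    (x1 x2 y1 y2 : V)
    (hx : incVerts S (MX ∩ M) = {x1, x2}) (hy : incVerts S (MY ∩ M) = {y1, y2})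
    (hd : [x1, x2, y1, y2].Pairwise (· ≠ ·))
    (he1 : s(x1, x2) ∈ cycleEdges G M S) (he2 : s(y1, y2) ∈ cycleEdges G M S) :
    (∀ e ∈ cycleEdges G M S,
      (e ∉ MX ∧ e ∉ MY) ↔ (e = s(x1, x2) ∨ e = s(y1, y2))) ∨
    (({e ∈ cycleEdges G M S | e ∈ MX ∪ MY}).Pairwise Sym2Disjoint ∧
     (∀ v ∈ S, ∃ e ∈ {e ∈ cycleEdges G M S | e ∈ MX ∪ MY}, v ∈ e) ∧
     s(x1, x2) ∈ MY ∧ s(x1, x2) ∉ MX ∧ s(y1, y2) ∈ MX ∧ s(y1, y2) ∉ MY ∧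
     (∀ e ∈ cycleEdges G M S, e ∈ MX ∪ MY →
        e ≠ s(x1, x2) → e ≠ s(y1, y2) → e ∈ MX ∧ e ∈ MY)) := by
  classical
  obtain ⟨c, hSc⟩ := hS
  -- distinctness
  rw [List.pairwise_cons, List.pairwise_cons, List.pairwise_cons] at hd
  obtain ⟨h1d, h2d, h3d, -⟩ := hd
  have hx1y1 : x1 ≠ y1 := h1d y1 (by simp)
  have hx1y2 : x1 ≠ y2 := h1d y2 (by simp)
  have hx2y1 : x2 ≠ y1 := h2d y1 (by simp)
  have hx2y2 : x2 ≠ y2 := h2d y2 (by simp)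
  have hxyne : s(x1, x2) ≠ s(y1, y2) := by
    intro h
    rw [Sym2.eq_iff] at h
    tauto
  -- closure of S under adjacency in G.deleteEdges M
  have hcl : ∀ ⦃u w : V⦄, u ∈ S → (G.deleteEdges M).Adj u w → w ∈ S := by
    intro u w hu hadj
    rw [hSc, ConnectedComponent.mem_supp_iff] at hu ⊢
    rw [← hu]
    exact ConnectedComponent.sound hadj.symm.reachable
  -- non-M edges of G through a vertex of S are cycle edges
  have hclE : ∀ ⦃e : Sym2 V⦄, e ∈ G.edgeSet → e ∉ M → ∀ ⦃v : V⦄, v ∈ S → v ∈ e →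
      e ∈ cycleEdges G M S := by
    intro e heG heM v hv hve
    refine ⟨heG, heM, ?_⟩
    induction e using Sym2.inductionOn with
    | hf a b =>
      rw [Sym2.mem_iff] at hve
      have hadj : G.Adj a b := heG
      intro w hw
      rw [Sym2.mem_iff] at hw
      rcases hve with rfl | rfl
      · rcases hw with rfl | rfl
        · exact hv
        · exact hcl hv (by rw [deleteEdges_adj]; exact ⟨hadj, heM⟩)
      · rcases hw with rfl | rfl
        · refine hcl hv ?_
          rw [deleteEdges_adj]
          exact ⟨hadj.symm, by rwa [Sym2.eq_swap]⟩
        · exact hv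
  -- degree two in the cycle
  have hdeg : ∀ v ∈ S, ({e ∈ cycleEdges G M S | v ∈ e} : Set (Sym2 V)).ncard = 2 := by
    intro v hv
    obtain ⟨f, hfM, hvf⟩ := hM.2 v
    have hfI : f ∈ G.incidenceSet v := ⟨hM.1.1 hfM, hvf⟩
    have hset : {e ∈ cycleEdges G M S | v ∈ e} = G.incidenceSet v \ {f} := by
      ext e
      constructor
      · rintro ⟨⟨heG, heM, -⟩, hve⟩
        refine ⟨⟨heG, hve⟩, fun h => heM ?_⟩
        rw [Set.mem_singleton_iff] at h
        exact h ▸ hfM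
      · rintro ⟨⟨heG, hve⟩, hef⟩
        have heM : e ∉ M := fun h => hef (matching_unique hM.1.2 h hfM hve hvf)
        exact ⟨hclE heG heM hv hve, hve⟩
    have hI : (G.incidenceSet v).ncard = 3 := by
      rw [← Nat.card_coe_set_eq, Nat.card_congr (G.incidenceSetEquivNeighborSet v),
        Nat.card_coe_set_eq]
      exact hcubic v
    rw [hset, Set.ncard_diff_singleton_of_mem hfI, hI]
  -- facts about the four vertices
  have hx1m : x1 ∈ S ∧ ∃ e ∈ MX ∩ M, x1 ∈ e := by
    have : x1 ∈ incVerts S (MX ∩ M) := by rw [hx]; simp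
    exact this
  have hx2m : x2 ∈ S ∧ ∃ e ∈ MX ∩ M, x2 ∈ e := by
    have : x2 ∈ incVerts S (MX ∩ M) := by rw [hx]; simp
    exact this
  have hy1m : y1 ∈ S ∧ ∃ e ∈ MY ∩ M, y1 ∈ e := by
    have : y1 ∈ incVerts S (MY ∩ M) := by rw [hy]; simp
    exact this
  have hy2m : y2 ∈ S ∧ ∃ e ∈ MY ∩ M, y2 ∈ e := by
    have : y2 ∈ incVerts S (MY ∩ M) := by rw [hy]; simp
    exact this
  -- no non-M edge of MX contains x1 or x2, similarly for MY
  have hxnot : ∀ v : V, (∃ e ∈ MX ∩ M, v ∈ e) → ∀ e ∈ MX, e ∉ M → v ∉ e := by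
    rintro v ⟨f, ⟨hfX, hfM⟩, hvf⟩ e heX heM hve
    exact heM ((matching_unique hMX.1.2 heX hfX hve hvf) ▸ hfM)
  have hynot : ∀ v : V, (∃ e ∈ MY ∩ M, v ∈ e) → ∀ e ∈ MY, e ∉ M → v ∉ e := by
    rintro v ⟨f, ⟨hfY, hfM⟩, hvf⟩ e heY heM hve
    exact heM ((matching_unique hMY.1.2 heY hfY hve hvf) ▸ hfM)
  -- the restricted matchings
  set mx : Set (Sym2 V) := {e | e ∈ MX ∧ e ∈ cycleEdges G M S} with hmx
  set my : Set (Sym2 V) := {e | e ∈ MY ∧ e ∈ cycleEdges G M S} with hmy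
  have hmx_cover : ∀ v ∈ S, v ≠ x1 → v ≠ x2 → ∃ e ∈ mx, v ∈ e := by
    intro v hv hv1 hv2
    obtain ⟨e, heX, hve⟩ := hMX.2 v
    have heM : e ∉ M := by
      intro heM
      have hmem : v ∈ incVerts S (MX ∩ M) := ⟨hv, e, ⟨heX, heM⟩, hve⟩
      rw [hx] at hmem
      rcases hmem with h | h
      · exact hv1 h
      · exact hv2 h
    exact ⟨e, ⟨heX, hclE (hMX.1.1 heX) heM hv hve⟩, hve⟩
  have hmy_cover : ∀ v ∈ S, v ≠ y1 → v ≠ y2 → ∃ e ∈ my, v ∈ e := by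
    intro v hv hv1 hv2
    obtain ⟨e, heY, hve⟩ := hMY.2 v
    have heM : e ∉ M := by
      intro heM
      have hmem : v ∈ incVerts S (MY ∩ M) := ⟨hv, e, ⟨heY, heM⟩, hve⟩
      rw [hy] at hmem
      rcases hmem with h | h
      · exact hv1 h
      · exact hv2 h
    exact ⟨e, ⟨heY, hclE (hMY.1.1 heY) heM hv hve⟩, hve⟩
  have hmx_notx : ∀ e ∈ mx, x1 ∉ e ∧ x2 ∉ e := by
    rintro e ⟨heX, heG, heM, -⟩
    exact ⟨hxnot x1 hx1m.2 e heX heM, hxnot x2 hx2m.2 e heX heM⟩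
  have hmy_noty : ∀ e ∈ my, y1 ∉ e ∧ y2 ∉ e := by
    rintro e ⟨heY, heG, heM, -⟩
    exact ⟨hynot y1 hy1m.2 e heY heM, hynot y2 hy2m.2 e heY heM⟩
  -- the completed matchings
  set P : Set (Sym2 V) := insert s(x1, x2) mx with hP
  set Q : Set (Sym2 V) := insert s(y1, y2) my with hQ
  have hPsub : P ⊆ cycleEdges G M S := by
    rintro e (rfl | ⟨-, he⟩)
    exacts [he1, he]
  have hQsub : Q ⊆ cycleEdges G M S := by
    rintro e (rfl | ⟨-, he⟩)
    exacts [he2, he]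
  have hmx_pair : mx.Pairwise Sym2Disjoint := hMX.1.2.mono (fun e he => he.1)
  have hmy_pair : my.Pairwise Sym2Disjoint := hMY.1.2.mono (fun e he => he.1)
  have hPpair : P.Pairwise Sym2Disjoint := by
    rw [hP, Set.pairwise_insert]
    refine ⟨hmx_pair, ?_⟩
    intro e he hne
    have hdj : Sym2Disjoint s(x1, x2) e := by
      intro v hv
      rw [Sym2.mem_iff] at hv
      rcases hv with rfl | rfl
      · exact (hmx_notx e he).1
      · exact (hmx_notx e he).2
    exact ⟨hdj, fun v hv hv' => hdj v hv' hv⟩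
  have hQpair : Q.Pairwise Sym2Disjoint := by
    rw [hQ, Set.pairwise_insert]
    refine ⟨hmy_pair, ?_⟩
    intro e he hne
    have hdj : Sym2Disjoint s(y1, y2) e := by
      intro v hv
      rw [Sym2.mem_iff] at hv
      rcases hv with rfl | rfl
      · exact (hmy_noty e he).1
      · exact (hmy_noty e he).2
    exact ⟨hdj, fun v hv hv' => hdj v hv' hv⟩
  have hPcov : ∀ v ∈ S, ∃ e ∈ P, v ∈ e := by
    intro v hv
    by_cases hv1 : v = x1
    · exact ⟨s(x1, x2), Set.mem_insert _ _, by rw [hv1]; exact Sym2.mem_mk_left _ _⟩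
    by_cases hv2 : v = x2
    · exact ⟨s(x1, x2), Set.mem_insert _ _, by rw [hv2]; exact Sym2.mem_mk_right _ _⟩
    obtain ⟨e, he, hve⟩ := hmx_cover v hv hv1 hv2
    exact ⟨e, Set.mem_insert_of_mem _ he, hve⟩
  have hQcov : ∀ v ∈ S, ∃ e ∈ Q, v ∈ e := by
    intro v hv
    by_cases hv1 : v = y1
    · exact ⟨s(y1, y2), Set.mem_insert _ _, by rw [hv1]; exact Sym2.mem_mk_left _ _⟩
    by_cases hv2 : v = y2
    · exact ⟨s(y1, y2), Set.mem_insert _ _, by rw [hv2]; exact Sym2.mem_mk_right _ _⟩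
    obtain ⟨e, he, hve⟩ := hmy_cover v hv hv1 hv2
    exact ⟨e, Set.mem_insert_of_mem _ he, hve⟩
  have hxxMX : s(x1, x2) ∉ MX := fun h =>
    hxnot x1 hx1m.2 _ h he1.2.1 (Sym2.mem_mk_left _ _)
  have hyyMY : s(y1, y2) ∉ MY := fun h =>
    hynot y1 hy1m.2 _ h he2.2.1 (Sym2.mem_mk_left _ _)
  -- the set in the statement equals mx ∪ my
  have hTset : {e ∈ cycleEdges G M S | e ∈ MX ∪ MY} = mx ∪ my := by
    ext e
    constructor
    · rintro ⟨hc, hX | hY⟩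
      · exact Or.inl ⟨hX, hc⟩
      · exact Or.inr ⟨hY, hc⟩
    · rintro (⟨hX, hc⟩ | ⟨hY, hc⟩)
      · exact ⟨hc, Or.inl hX⟩
      · exact ⟨hc, Or.inr hY⟩
  -- main dichotomy
  rcases Set.eq_empty_or_nonempty (P ∩ Q) with hPQ | ⟨f0, hf0P, hf0Q⟩
  · -- P and Q disjoint: complementary matchings, first alternative
    left
    have hcomp : ∀ e ∈ cycleEdges G M S, e ∈ P ∪ Q := by
      intro e he
      obtain ⟨v, hve⟩ := sym2_exists_mem e
      have hv : v ∈ S := he.2.2 v hve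
      obtain ⟨p, hpP, hvp⟩ := hPcov v hv
      obtain ⟨q, hqQ, hvq⟩ := hQcov v hv
      have hpq : p ≠ q := by
        rintro rfl
        exact (hPQ ▸ (⟨hpP, hqQ⟩ : p ∈ P ∩ Q) : p ∈ (∅ : Set (Sym2 V)))
      have h2 := hdeg v hv
      have hep : e ∈ {e ∈ cycleEdges G M S | v ∈ e} := ⟨he, hve⟩
      have hpp : p ∈ {e ∈ cycleEdges G M S | v ∈ e} := ⟨hPsub hpP, hvp⟩
      have hqq : q ∈ {e ∈ cycleEdges G M S | v ∈ e} := ⟨hQsub hqQ, hvq⟩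
      rcases two_set_mem h2 hep hpp hqq hpq with rfl | rfl
      · exact Or.inl hpP
      · exact Or.inr hqQ
    intro e he
    constructor
    · rintro ⟨heX, heY⟩
      rcases hcomp e he with hP' | hQ'
      · rcases hP' with h | h
        · exact Or.inl h
        · exact absurd h.1 heX
      · rcases hQ' with h | h
        · exact Or.inr h
        · exact absurd h.1 heY
    · rintro (rfl | rfl)
      · refine ⟨hxxMX, fun h => ?_⟩
        have hmem : s(x1, x2) ∈ P ∩ Q := ⟨Set.mem_insert _ _,
          Set.mem_insert_of_mem _ ⟨h, he1⟩⟩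
        rw [hPQ] at hmem
        exact hmem
      · refine ⟨fun h => ?_, hyyMY⟩
        have hmem : s(y1, y2) ∈ P ∩ Q := ⟨Set.mem_insert_of_mem _ ⟨h, he2⟩,
          Set.mem_insert _ _⟩
        rw [hPQ] at hmem
        exact hmem
  · -- P and Q intersect: they are equal, second alternative
    right
    obtain ⟨v0, hv0f⟩ := sym2_exists_mem f0
    have hv0S : v0 ∈ S := (hPsub hf0P).2.2 v0 hv0f
    have hstep : ∀ u w : V, u ∈ S → (G.deleteEdges M).Adj u w →
        (∃ e, e ∈ P ∧ e ∈ Q ∧ u ∈ e) → (∃ e, e ∈ P ∧ e ∈ Q ∧ w ∈ e) := by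
      rintro u w hu hadj ⟨f, hfP, hfQ, huf⟩
      have hwS : w ∈ S := hcl hu hadj
      obtain ⟨p, hpP, hwp⟩ := hPcov w hwS
      obtain ⟨q, hqQ, hwq⟩ := hQcov w hwS
      by_cases hwf : w ∈ f
      · exact ⟨f, hfP, hfQ, hwf⟩
      · have hadj' := hadj
        rw [deleteEdges_adj] at hadj'
        have huwE : s(u, w) ∈ cycleEdges G M S :=
          hclE (G.mem_edgeSet.mpr hadj'.1) hadj'.2 hu (Sym2.mem_mk_left _ _)
        have hpne : p ≠ s(u, w) := by
          rintro rfl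
          exact hwf ((matching_unique hPpair hpP hfP (Sym2.mem_mk_left _ _) huf) ▸ hwp)
        have hqne : q ≠ s(u, w) := by
          rintro rfl
          exact hwf ((matching_unique hQpair hqQ hfQ (Sym2.mem_mk_left _ _) huf) ▸ hwq)
        have h2 := hdeg w hwS
        have huw : s(u, w) ∈ {e ∈ cycleEdges G M S | w ∈ e} := ⟨huwE, Sym2.mem_mk_right _ _⟩
        have hpp : p ∈ {e ∈ cycleEdges G M S | w ∈ e} := ⟨hPsub hpP, hwp⟩
        have hqq : q ∈ {e ∈ cycleEdges G M S | w ∈ e} := ⟨hQsub hqQ, hwq⟩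
        have hpq : p = q := two_set_eq h2 huw hpp hqq hpne hqne
        exact ⟨p, hpP, hpq ▸ hqQ, hwp⟩
    have hwalk : ∀ u v : V, (G.deleteEdges M).Walk u v → u ∈ S →
        (∃ e, e ∈ P ∧ e ∈ Q ∧ u ∈ e) → (∃ e, e ∈ P ∧ e ∈ Q ∧ v ∈ e) := by
      intro u v p
      induction p with
      | nil => exact fun _ h => h
      | cons h p ih => exact fun hu hphi => ih (hcl hu h) (hstep _ _ hu h hphi)
    have hphi : ∀ v ∈ S, ∃ e, e ∈ P ∧ e ∈ Q ∧ v ∈ e := by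
      intro v hv
      have hreach : (G.deleteEdges M).Reachable v0 v := by
        have h0 : v0 ∈ c.supp := hSc ▸ hv0S
        have h1 : v ∈ c.supp := hSc ▸ hv
        rw [ConnectedComponent.mem_supp_iff] at h0 h1
        exact ConnectedComponent.exact (h0.trans h1.symm)
      obtain ⟨w⟩ := hreach
      exact hwalk v0 v w hv0S ⟨f0, hf0P, hf0Q, hv0f⟩
    have hPQeq : P = Q := by
      ext e
      constructor
      · intro heP
        obtain ⟨v, hve⟩ := sym2_exists_mem e
        have hvS : v ∈ S := (hPsub heP).2.2 v hve
        obtain ⟨g, hgP, hgQ, hvg⟩ := hphi v hvS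
        exact (matching_unique hPpair heP hgP hve hvg) ▸ hgQ
      · intro heQ
        obtain ⟨v, hve⟩ := sym2_exists_mem e
        have hvS : v ∈ S := (hQsub heQ).2.2 v hve
        obtain ⟨g, hgP, hgQ, hvg⟩ := hphi v hvS
        exact (matching_unique hQpair heQ hgQ hve hvg) ▸ hgP
    have hxxMY : s(x1, x2) ∈ MY := by
      have hmem : s(x1, x2) ∈ Q := hPQeq ▸ Set.mem_insert _ _
      rcases hmem with h | h
      · exact absurd h hxyne
      · exact h.1
    have hyyMX : s(y1, y2) ∈ MX := by
      have hmem : s(y1, y2) ∈ P := hPQeq ▸ Set.mem_insert _ _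
      rcases hmem with h | h
      · exact absurd h.symm hxyne
      · exact h.1
    have hTP : {e ∈ cycleEdges G M S | e ∈ MX ∪ MY} = P := by
      rw [hTset]
      apply Set.Subset.antisymm
      · rintro e (he | he)
        · exact Set.mem_insert_of_mem _ he
        · exact hPQeq ▸ (Set.mem_insert_of_mem _ he : e ∈ Q)
      · rintro e (rfl | he)
        · exact Or.inr ⟨hxxMY, he1⟩
        · exact Or.inl he
    refine ⟨?_, ?_, hxxMY, hxxMX, hyyMX, hyyMY, ?_⟩
    · rw [hTP]; exact hPpair
    · intro v hv
      rw [hTP]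
      exact hPcov v hv
    · intro e he heXY hex hey
      have heP : e ∈ P := by rw [← hTP]; exact ⟨he, heXY⟩
      refine ⟨?_, ?_⟩
      · rcases heP with h | h
        · exact absurd h hex
        · exact h.1
      · have heQ : e ∈ Q := hPQeq ▸ heP
        rcases heQ with h | h
        · exact absurd h hey
        · exact h.1
end

section
/- Let G be a cubic graph, M a perfect matching of G, and Γ an even cycle of G∖M. Let M_X be a perfect matching of G such that exactly four vertices x1, x2, x3, x4 of Γ are incident with edges of M_X ∩ M, where x1x2 and x3x4 are edges of Γ. Let Y be an M-balanced matching of G no edge of which is incident with a vertex of Γ. Then there exists a perfect matching M_Y of G with M_Y ∩ M = Y such that x1x2 and x3x4 are the only edges of Γ belonging to neither M_X nor M_Y. -/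
open SimpleGraph

variable {V : Type*}

lemma pmUnique {G : SimpleGraph V} {N : Set (Sym2 V)} (h : IsPerfectMatchingSet G N)
    {e f : Sym2 V} (he : e ∈ N) (hf : f ∈ N) {v : V} (hve : v ∈ e) (hvf : v ∈ f) : e = f := by
  by_contra hne
  exact h.1.2 he hf hne v hve hvf

lemma fourDistinct {s : Set V} (hfin : s.Finite) (h3 : s.ncard = 3) {u a b w : V}
    (hu : u ∈ s) (ha : a ∈ s) (hb : b ∈ s) (hw : w ∈ s)
    (hua : u ≠ a) (hub : u ≠ b) (hab : a ≠ b) (hwu : w ≠ u) (hwa : w ≠ a) (hwb : w ≠ b) :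
    False := by
  have hsub : ({w, u, a, b} : Set V) ⊆ s := by
    intro x hx
    rcases hx with rfl | rfl | rfl | rfl <;> assumption
  have hf1 : ({w, u, a, b} : Set V).Finite := hfin.subset hsub
  have hf2 : ({u, a, b} : Set V).Finite := hf1.subset (Set.subset_insert _ _)
  have hf3 : ({a, b} : Set V).Finite := hf2.subset (Set.subset_insert _ _)
  have hc4 : ({w, u, a, b} : Set V).ncard = 4 := by
    rw [Set.ncard_insert_of_notMem (by simp [hwu, hwa, hwb]) hf2]
    rw [Set.ncard_insert_of_notMem (by simp [hua, hub]) hf3]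
    rw [Set.ncard_insert_of_notMem (by simp [hab]) (hf3.subset (Set.subset_insert _ _))]
    simp
  have := Set.ncard_le_ncard hsub hfin
  omega

lemma thirdNeighbor {s : Set V} (hfin : s.Finite) (h3 : s.ncard = 3) (u w : V) :
    ∃ a ∈ s, a ≠ u ∧ a ≠ w := by
  by_contra h
  push_neg at h
  have hsub : s ⊆ {u, w} := by
    intro x hx
    by_cases hxu : x = u
    · simp [hxu]
    · simp [h x hx hxu]
  have := Set.ncard_le_ncard hsub ((Set.finite_singleton w).insert u)
  have h2 : ({u, w} : Set V).ncard ≤ 2 := by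
    apply le_trans (Set.ncard_insert_le _ _)
    simp [Set.ncard_singleton]
  omega


/-- Let `Γ` (with vertex set `S`) be an even cycle of `G∖M` and let
`M_X` be a perfect matching such that exactly the four pairwise distinct vertices
`x1, x2, x3, x4` of `Γ` are incident with edges of `M_X ∩ M`, where `x1x2` and `x3x4`
are edges of `Γ`. Let `Y` be an `M`-balanced matching no edge of which is incident with
a vertex of `Γ`. Then there is a perfect matching `M_Y` with `M_Y ∩ M = Y` such that
`x1x2` and `x3x4` are the only edges of `Γ` belonging to neither `M_X` nor `M_Y`. -/
theorem stmt_11 {V : Type*} [Fintype V] (G : SimpleGraph V)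
    (hcubic : IsCubic G)
    (M : Set (Sym2 V)) (hM : IsPerfectMatchingSet G M)
    (S : Set V) (hS : IsCycleOf G M S) (heven : Even S.ncard)
    (MX : Set (Sym2 V)) (hMX : IsPerfectMatchingSet G MX)
    (x1 x2 x3 x4 : V)
    (hx : incVerts S (MX ∩ M) = {x1, x2, x3, x4})
    (hd : [x1, x2, x3, x4].Pairwise (· ≠ ·))
    (he1 : s(x1, x2) ∈ cycleEdges G M S) (he2 : s(x3, x4) ∈ cycleEdges G M S)
    (Y : Set (Sym2 V)) (hY : IsBalancedMatching G M Y)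
    (hYS : ∀ e ∈ Y, ∀ v ∈ e, v ∉ S) :
    ∃ MY : Set (Sym2 V), IsPerfectMatchingSet G MY ∧ MY ∩ M = Y ∧
      ∀ e ∈ cycleEdges G M S,
        (e ∉ MX ∧ e ∉ MY) ↔ (e = s(x1, x2) ∨ e = s(x3, x4)) := by
  obtain ⟨c, hc⟩ := hS
  obtain ⟨M', hM', hYeq⟩ := hY
  simp only [List.pairwise_cons, List.mem_cons, List.mem_singleton, List.not_mem_nil] at hd
  have h12 : x1 ≠ x2 := hd.1 x2 (by simp)
  have h13 : x1 ≠ x3 := hd.1 x3 (by simp)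
  have h14 : x1 ≠ x4 := hd.1 x4 (by simp)
  have h23 : x2 ≠ x3 := hd.2.1 x3 (by simp)
  have h24 : x2 ≠ x4 := hd.2.1 x4 (by simp)
  have h34 : x3 ≠ x4 := hd.2.2.1 x4 (by simp)
  have erep : ∀ (e : Sym2 V) (v : V), v ∈ e → ∃ w, e = s(v, w) :=
    fun e v h => Sym2.mem_iff_exists.mp h
  have hedgeS : ∀ v ∈ S, ∀ w, G.Adj v w → s(v, w) ∉ M → s(v, w) ∈ cycleEdges G M S := by
    intro v hv w hadj hnm
    have hwS : w ∈ S := by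
      rw [hc] at hv ⊢
      rw [SimpleGraph.ConnectedComponent.mem_supp_iff] at hv ⊢
      rw [← hv]
      exact (SimpleGraph.ConnectedComponent.sound
        (SimpleGraph.deleteEdges_adj.mpr ⟨hadj, hnm⟩).reachable).symm
    refine ⟨(SimpleGraph.mem_edgeSet G).mpr hadj, hnm, ?_⟩
    intro x hxm
    rcases Sym2.mem_iff.mp hxm with rfl | rfl
    · exact hv
    · exact hwS
  have hxmem : ∀ v ∈ ({x1, x2, x3, x4} : Set V), v ∈ S ∧ ∃ e ∈ MX ∩ M, v ∈ e := by
    intro v hv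
    rw [← hx] at hv
    exact hv
  have hnx : ∀ v ∈ S, v ∉ ({x1, x2, x3, x4} : Set V) → ∀ e ∈ MX, v ∈ e → e ∉ M := by
    intro v hv hvn e heX hve heM
    exact hvn (hx ▸ ⟨hv, e, ⟨heX, heM⟩, hve⟩)
  have hpexc : ∀ v ∈ ({x1, x2, x3, x4} : Set V), ∃ p,
      (s(v, p) = s(x1, x2) ∨ s(v, p) = s(x3, x4)) ∧
      ∀ q, (s(v, q) = s(x1, x2) ∨ s(v, q) = s(x3, x4)) → q = p := by
    intro v hv
    simp only [Set.mem_insert_iff, Set.mem_singleton_iff] at hv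
    rcases hv with rfl | rfl | rfl | rfl
    · exact ⟨x2, Or.inl rfl, fun q hq => by
        rcases hq with h | h <;> rw [Sym2.eq_iff] at h <;> tauto⟩
    · exact ⟨x1, Or.inl Sym2.eq_swap, fun q hq => by
        rcases hq with h | h <;> rw [Sym2.eq_iff] at h <;> tauto⟩
    · exact ⟨x4, Or.inr rfl, fun q hq => by
        rcases hq with h | h <;> rw [Sym2.eq_iff] at h <;> tauto⟩
    · exact ⟨x3, Or.inr Sym2.eq_swap, fun q hq => by
        rcases hq with h | h <;> rw [Sym2.eq_iff] at h <;> tauto⟩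
  set F : Set (Sym2 V) := cycleEdges G M S \ (MX ∪ {s(x1, x2), s(x3, x4)}) with hFdef
  have hFS : ∀ e ∈ F, ∀ x ∈ e, x ∈ S := fun e he => he.1.2.2
  have hkey : ∀ v ∈ S, (∃ e ∈ F, v ∈ e) ∧
      (∀ e ∈ F, ∀ f ∈ F, v ∈ e → v ∈ f → e = f) := by
    intro v hvS
    obtain ⟨em, hem, hvem⟩ := hM.2 v
    obtain ⟨u, rfl⟩ := erep em v hvem
    have hadju : G.Adj v u := (SimpleGraph.mem_edgeSet G).mp (hM.1.1 hem)
    have hMedge : ∀ e ∈ M, v ∈ e → e = s(v, u) :=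
      fun e he hv' => pmUnique hM he hem hv' (Sym2.mem_mk_left v u)
    have hblock : ∃ w, G.Adj v w ∧ w ≠ u ∧
        (s(v, w) ∈ MX ∨ s(v, w) = s(x1, x2) ∨ s(v, w) = s(x3, x4)) ∧
        ∀ a, G.Adj v a → a ≠ u →
          (s(v, a) ∈ MX ∨ s(v, a) = s(x1, x2) ∨ s(v, a) = s(x3, x4)) → a = w := by
      by_cases hvx : v ∈ ({x1, x2, x3, x4} : Set V)
      · obtain ⟨p, hp, hpu⟩ := hpexc v hvx
        have hpcyc : s(v, p) ∈ cycleEdges G M S := by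
          rcases hp with h | h <;> rw [h]
          exacts [he1, he2]
        have hadjp : G.Adj v p := (SimpleGraph.mem_edgeSet G).mp hpcyc.1
        have hpnu : p ≠ u := by
          rintro rfl
          exact hpcyc.2.1 hem
        obtain ⟨-, g, ⟨hgX, hgM⟩, hvg⟩ := hxmem v hvx
        refine ⟨p, hadjp, hpnu, Or.inr hp, ?_⟩
        intro a hadja hau hbad
        rcases hbad with hmx | hE
        · exfalso
          have := pmUnique hMX hmx hgX (Sym2.mem_mk_left v a) hvg
          have : s(v, a) ∈ M := this ▸ hgM
          exact hau (Sym2.congr_right.mp (hMedge _ this (Sym2.mem_mk_left v a)))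
        · exact hpu a hE
      · obtain ⟨g, hgX, hvg⟩ := hMX.2 v
        have hgnM : g ∉ M := hnx v hvS hvx g hgX hvg
        obtain ⟨w, rfl⟩ := erep g v hvg
        have hadjw : G.Adj v w := (SimpleGraph.mem_edgeSet G).mp (hMX.1.1 hgX)
        have hwu : w ≠ u := by
          rintro rfl
          exact hgnM hem
        refine ⟨w, hadjw, hwu, Or.inl hgX, ?_⟩
        intro a hadja hau hbad
        rcases hbad with hmx | hE | hE
        · exact Sym2.congr_right.mp
            (pmUnique hMX hmx hgX (Sym2.mem_mk_left v a) (Sym2.mem_mk_left v w))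
        · exfalso
          apply hvx
          have : v ∈ s(x1, x2) := hE ▸ Sym2.mem_mk_left v a
          rcases Sym2.mem_iff.mp this with rfl | rfl <;> simp
        · exfalso
          apply hvx
          have : v ∈ s(x3, x4) := hE ▸ Sym2.mem_mk_left v a
          rcases Sym2.mem_iff.mp this with rfl | rfl <;> simp
    obtain ⟨w, hadjw, hwu, hbadw, huniq⟩ := hblock
    constructor
    · obtain ⟨a, haN, hau, haw⟩ := thirdNeighbor (Set.toFinite _) (hcubic v) u w
      have hadja : G.Adj v a := haN
      have hnm : s(v, a) ∉ M := by
        intro h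
        exact hau (Sym2.congr_right.mp (hMedge _ h (Sym2.mem_mk_left v a)))
      refine ⟨s(v, a), ⟨hedgeS v hvS a hadja hnm, ?_⟩, Sym2.mem_mk_left v a⟩
      intro hb
      apply haw
      apply huniq a hadja hau
      rcases hb with h | h
      · exact Or.inl h
      · simp only [Set.mem_insert_iff, Set.mem_singleton_iff] at h
        exact Or.inr h
    · intro e heF f hfF hve hvf
      obtain ⟨a, rfl⟩ := erep e v hve
      obtain ⟨b, rfl⟩ := erep f v hvf
      by_contra hne
      have hab : a ≠ b := fun h => hne (by rw [h])
      have hadja : G.Adj v a := (SimpleGraph.mem_edgeSet G).mp heF.1.1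
      have hadjb : G.Adj v b := (SimpleGraph.mem_edgeSet G).mp hfF.1.1
      have hau : a ≠ u := by
        rintro rfl
        exact heF.1.2.1 hem
      have hbu : b ≠ u := by
        rintro rfl
        exact hfF.1.2.1 hem
      have hgooda : ¬(s(v, a) ∈ MX ∨ s(v, a) = s(x1, x2) ∨ s(v, a) = s(x3, x4)) := by
        intro hb'
        apply heF.2
        rcases hb' with h | h | h
        · exact Or.inl h
        · exact Or.inr (by simp [h])
        · exact Or.inr (by simp [h])
      have hgoodb : ¬(s(v, b) ∈ MX ∨ s(v, b) = s(x1, x2) ∨ s(v, b) = s(x3, x4)) := by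
        intro hb'
        apply hfF.2
        rcases hb' with h | h | h
        · exact Or.inl h
        · exact Or.inr (by simp [h])
        · exact Or.inr (by simp [h])
      have hwa : w ≠ a := by
        rintro rfl
        exact hgooda hbadw
      have hwb : w ≠ b := by
        rintro rfl
        exact hgoodb hbadw
      exact fourDistinct (Set.toFinite _) (hcubic v) (hadju : u ∈ G.neighborSet v)
        (hadja : a ∈ G.neighborSet v) (hadjb : b ∈ G.neighborSet v)
        (hadjw : w ∈ G.neighborSet v)
        (Ne.symm hau) (Ne.symm hbu) hab hwu hwa hwb
  have hM'cyc : ∀ v ∈ S, ∀ e ∈ M', v ∈ e → e ∈ cycleEdges G M S := by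
    intro v hv e he hve
    obtain ⟨w, rfl⟩ := erep e v hve
    have hnm : s(v, w) ∉ M := fun hm =>
      hYS _ (hYeq ▸ (⟨hm, he⟩ : s(v, w) ∈ M ∩ M')) v (Sym2.mem_mk_left v w) hv
    exact hedgeS v hv w ((SimpleGraph.mem_edgeSet G).mp (hM'.1.1 he)) hnm
  refine ⟨(M' \ cycleEdges G M S) ∪ F, ⟨⟨?_, ?_⟩, ?_⟩, ?_, ?_⟩
  · rintro e (⟨he, -⟩ | he)
    exacts [hM'.1.1 he, he.1.1]
  · intro e he f hf hne v hve hvf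
    apply hne
    rcases he with ⟨heM, heC⟩ | heF <;> rcases hf with ⟨hfM, hfC⟩ | hfF
    · exact pmUnique hM' heM hfM hve hvf
    · exact absurd (hM'cyc v (hFS f hfF v hvf) e heM hve) heC
    · exact absurd (hM'cyc v (hFS e heF v hve) f hfM hvf) hfC
    · exact (hkey v (hFS e heF v hve)).2 e heF f hfF hve hvf
  · intro v
    by_cases hvS : v ∈ S
    · obtain ⟨e, he, hv⟩ := (hkey v hvS).1
      exact ⟨e, Or.inr he, hv⟩
    · obtain ⟨e, he, hv⟩ := hM'.2 v
      exact ⟨e, Or.inl ⟨he, fun hcy => hvS (hcy.2.2 v hv)⟩, hv⟩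
  · ext e
    constructor
    · rintro ⟨⟨he, -⟩ | heF, hm⟩
      · exact hYeq ▸ (⟨hm, he⟩ : e ∈ M ∩ M')
      · exact absurd hm heF.1.2.1
    · intro he
      have heMM' : e ∈ M ∩ M' := hYeq ▸ he
      exact ⟨Or.inl ⟨heMM'.2, fun hcy => hcy.2.1 heMM'.1⟩, heMM'.1⟩
  · intro e he
    constructor
    · rintro ⟨hnX, hnY⟩
      by_contra hcon
      push_neg at hcon
      apply hnY
      refine Or.inr ⟨he, ?_⟩
      rintro (h | h)
      · exact hnX h
      · simp only [Set.mem_insert_iff, Set.mem_singleton_iff] at h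
        rcases h with h | h
        exacts [hcon.1 h, hcon.2 h]
    · intro h
      constructor
      · rcases h with rfl | rfl
        · intro hmx
          obtain ⟨-, g, ⟨hgX, hgM⟩, hx1g⟩ := hxmem x1 (by simp)
          have := pmUnique hMX hmx hgX (Sym2.mem_mk_left x1 x2) hx1g
          exact he1.2.1 (this ▸ hgM)
        · intro hmx
          obtain ⟨-, g, ⟨hgX, hgM⟩, hx3g⟩ := hxmem x3 (by simp)
          have := pmUnique hMX hmx hgX (Sym2.mem_mk_left x3 x4) hx3g
          exact he2.2.1 (this ▸ hgM)
      · rintro (⟨-, hcy⟩ | heF)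
        · apply hcy
          rcases h with rfl | rfl
          exacts [he1, he2]
        · apply heF.2
          refine Or.inr ?_
          rcases h with rfl | rfl <;> simp
end
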